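/- arXiv:2212.06553 — 9 statements merged into one kernel-verified Lean document; each statement's English description precedes it below -/
import Mathlib

section
/- Let c_1, …, c_N (N ≥ 2) be nonnegative real numbers which are not lopsided, i.e. for every index i one has c_i ≤ Σ_{j ≠ i} c_j. Then there exist complex numbers ζ_1, …, ζ_N with |ζ_i| = 1 for all i such that Σ_{i=1}^N ζ_i c_i = 0. -/
/-- Sign-balancing: nonneg reals each ≤ m can be signed so the signed sum has |·| ≤ m. -/
lemma aux_signs {ι : Type*} [DecidableEq ι] (m : ℝ) (hm : 0 ≤ m) (f : ι → ℝ)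
    (s : Finset ι) (hf : ∀ i ∈ s, 0 ≤ f i ∧ f i ≤ m) :
    ∃ ε : ι → ℝ, (∀ i, ε i = 1 ∨ ε i = -1) ∧ |∑ i ∈ s, ε i * f i| ≤ m := by
  induction s using Finset.cons_induction with
  | empty => exact ⟨fun _ => 1, fun _ => Or.inl rfl, by simpa using hm⟩
  | cons a s ha ih =>
    obtain ⟨ε, hε1, hε2⟩ := ih (fun i hi => hf i (Finset.mem_cons_of_mem hi))
    obtain ⟨hfa0, hfam⟩ := hf a (Finset.mem_cons_self a s)
    set T := ∑ i ∈ s, ε i * f i with hT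
    by_cases hTpos : 0 ≤ T
    · refine ⟨fun i => if i = a then -1 else ε i, fun i => ?_, ?_⟩
      · by_cases hia : i = a <;> simp [hia, hε1 i]
      · rw [Finset.sum_cons]
        have : ∑ i ∈ s, (if i = a then (-1:ℝ) else ε i) * f i = T := by
          apply Finset.sum_congr rfl
          intro i hi
          have : i ≠ a := by rintro rfl; exact ha hi
          simp [this]
        rw [this]
        rw [abs_le] at hε2 ⊢
        constructor <;> simp <;> nlinarith [hε2.1, hε2.2]
    · refine ⟨fun i => if i = a then 1 else ε i, fun i => ?_, ?_⟩
      · by_cases hia : i = a <;> simp [hia, hε1 i]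
      · rw [Finset.sum_cons]
        have : ∑ i ∈ s, (if i = a then (1:ℝ) else ε i) * f i = T := by
          apply Finset.sum_congr rfl
          intro i hi
          have : i ≠ a := by rintro rfl; exact ha hi
          simp [this]
        rw [this]
        rw [abs_le] at hε2 ⊢
        constructor <;> simp <;> nlinarith [hε2.1, hε2.2]

/-- Triangle lemma: if a,b,c satisfy the triangle inequalities, there are unit phases
making `u a + v b + w c = 0`. -/
lemma aux_triangle (a b c : ℝ) (_ha : 0 ≤ a) (_hb : 0 ≤ b) (hc : 0 ≤ c)
    (h1 : a ≤ b + c) (h2 : b ≤ a + c) (h3 : c ≤ a + b) :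
    ∃ u v w : ℂ, ‖u‖ = 1 ∧ ‖v‖ = 1 ∧ ‖w‖ = 1 ∧
      u * a + v * b + w * c = 0 := by
  by_cases hc0 : c = 0
  · subst hc0
    have hab : a = b := le_antisymm (by linarith) (by linarith)
    exact ⟨1, -1, 1, by simp, by simp, by simp, by push_cast [hab]; ring⟩
  · have hcpos : 0 < c := lt_of_le_of_ne hc (Ne.symm hc0)
    set g : ℝ → ℝ := fun t => ‖(a : ℂ) + (b : ℂ) * Complex.exp (t * Complex.I)‖
      with hg
    have hcont : ContinuousOn g (Set.Icc 0 Real.pi) := by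
      apply Continuous.continuousOn
      exact continuous_norm.comp (by continuity)
    have hg0 : g 0 = a + b := by
      simp only [hg]
      norm_num
      rw [show (a:ℂ) + b = ((a + b : ℝ) : ℂ) by push_cast; ring, Complex.norm_real, Real.norm_eq_abs]
      rw [abs_of_nonneg (by linarith)]
    have hgpi : g Real.pi = |a - b| := by
      simp only [hg]
      rw [Complex.exp_pi_mul_I]
      rw [show (a:ℂ) + b * (-1) = ((a - b : ℝ) : ℂ) by push_cast; ring, Complex.norm_real, Real.norm_eq_abs]
    have hmem : c ∈ Set.Icc (g Real.pi) (g 0) := by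
      rw [hg0, hgpi]
      constructor
      · rw [abs_sub_le_iff]; constructor <;> linarith
      · linarith
    obtain ⟨θ, _, hθ⟩ := intermediate_value_Icc' Real.pi_nonneg hcont hmem
    set z : ℂ := (a : ℂ) + (b : ℂ) * Complex.exp (θ * Complex.I) with hz
    have habs : ‖z‖ = c := hθ
    refine ⟨1, Complex.exp (θ * Complex.I), -z / c, by simp, ?_, ?_, ?_⟩
    · rw [Complex.norm_exp]
      simp
    · rw [norm_div, norm_neg, habs, Complex.norm_real, Real.norm_eq_abs, abs_of_pos hcpos]
      exact div_self hcpos.ne'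
    · have hcne : (c : ℂ) ≠ 0 := by exact_mod_cast hc0
      have : (-z / c) * c = -z := by field_simp
      rw [this, hz]
      ring

/-- If a list of nonnegative reals `c 1, …, c N` (with `N ≥ 2`) is not lopsided, i.e. every
`c i` is at most the sum of the others, then there are phases `ζ i` on the unit circle with
`∑ i, ζ i * c i = 0`. -/
theorem not_lopsided_exists_phases
    (N : ℕ) (hN : 2 ≤ N) (c : Fin N → ℝ)
    (hc : ∀ i, 0 ≤ c i)
    (h : ∀ i, c i ≤ ∑ j ∈ Finset.univ.erase i, c j) :
    ∃ ζ : Fin N → ℂ, (∀ i, ‖ζ i‖ = 1) ∧ ∑ i, ζ i * (c i : ℂ) = 0 := by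
  have hne : (Finset.univ : Finset (Fin N)).Nonempty := by
    have : 0 < N := by omega
    exact ⟨⟨0, this⟩, Finset.mem_univ _⟩
  obtain ⟨i0, -, hi0⟩ := Finset.exists_max_image Finset.univ c hne
  obtain ⟨ε, hε1, hε2⟩ := aux_signs (c i0) (hc i0) c (Finset.univ.erase i0)
    (fun i _ => ⟨hc i, hi0 i (Finset.mem_univ i)⟩)
  set s := Finset.univ.erase i0 with hs
  set T := ∑ i ∈ s, ε i * c i with hT
  set B := ∑ i ∈ s.filter (fun i => ε i = 1), c i with hB
  set C := ∑ i ∈ s.filter (fun i => ¬ ε i = 1), c i with hC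
  have hBC : B - C = T := by
    rw [hB, hC, hT, ← Finset.sum_filter_add_sum_filter_not s (fun i => ε i = 1)]
    rw [eq_comm]
    have e1 : ∑ i ∈ s.filter (fun i => ε i = 1), ε i * c i = B := by
      rw [hB]; apply Finset.sum_congr rfl; intro i hi
      rw [(Finset.mem_filter.mp hi).2, one_mul]
    have e2 : ∑ i ∈ s.filter (fun i => ¬ ε i = 1), ε i * c i = -C := by
      rw [hC, ← Finset.sum_neg_distrib]; apply Finset.sum_congr rfl; intro i hi
      have := (Finset.mem_filter.mp hi).2
      rcases hε1 i with h' | h'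
      · exact absurd h' this
      · rw [h']; ring
    rw [e1, e2]; ring
  have hBCsum : B + C = ∑ i ∈ s, c i := by
    rw [hB, hC, Finset.sum_filter_add_sum_filter_not]
  have hB0 : 0 ≤ B := Finset.sum_nonneg fun i _ => hc i
  have hC0 : 0 ≤ C := Finset.sum_nonneg fun i _ => hc i
  have habsT : |T| ≤ c i0 := hε2
  rw [abs_le] at habsT
  obtain ⟨u, v, w, hu, hv, hw, huvw⟩ := aux_triangle (c i0) B C (hc i0) hB0 hC0
    (by rw [hBCsum]; exact h i0) (by linarith [habsT.2]) (by linarith [habsT.1])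
  refine ⟨fun i => if i = i0 then u else if ε i = 1 then v else w, fun i => ?_, ?_⟩
  · by_cases h1 : i = i0
    · simp [h1, hu]
    · by_cases h2 : ε i = 1 <;> simp [h1, h2, hu, hv, hw]
  · rw [← Finset.add_sum_erase _ _ (Finset.mem_univ i0), ← hs]
    have : ∑ i ∈ s, (if i = i0 then u else if ε i = 1 then v else w) * (c i : ℂ)
        = v * B + w * C := by
      rw [← Finset.sum_filter_add_sum_filter_not s (fun i => ε i = 1)]
      congr 1
      · rw [hB]
        push_cast
        rw [Finset.mul_sum]
        apply Finset.sum_congr rfl; intro i hi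
        have hi1 := Finset.mem_filter.mp hi
        have : i ≠ i0 := Finset.ne_of_mem_erase hi1.1
        simp [this, hi1.2]
      · rw [hC]
        push_cast
        rw [Finset.mul_sum]
        apply Finset.sum_congr rfl; intro i hi
        have hi1 := Finset.mem_filter.mp hi
        have : i ≠ i0 := Finset.ne_of_mem_erase hi1.1
        simp [this, hi1.2]
    rw [this]
    have h0 : (fun i => if i = i0 then u else if ε i = 1 then v else w) i0 = u := by simp
    rw [h0]
    linear_combination huvw
end

section
/- Let k be a real number and let P(z,w) = k − z − z^{-1} − w − w^{-1} be the Newton polynomial of 𝔽₀ = ℙ¹×ℙ¹. For (x,y) ∈ ℝ²: (i) if 2·cosh x + 2·cosh y < |k| then (x,y) does not belong to the amoeba of P; (ii) if k ≠ 0 and 2·cosh x + 2·cosh y = |k| then (x,y) belongs to the amoeba of P. Consequently, for k with |k| > 4 the set {(x,y) : 2·cosh x + 2·cosh y < |k|} is a nonempty bounded complement component (hole) of the amoeba, whose boundary is the curve x = ln| |k|/2 − cosh y ± √((|k|/2 − cosh y)² − 1) |. -/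
open Real

/-- The amoeba of the `𝔽₀ = ℙ¹×ℙ¹` Newton polynomial `P(z,w) = k - z - z⁻¹ - w - w⁻¹`. -/
def amoebaF0 (k : ℝ) : Set (ℝ × ℝ) :=
  {p | ∃ z w : ℂ, z ≠ 0 ∧ w ≠ 0 ∧ (k : ℂ) - z - z⁻¹ - w - w⁻¹ = 0 ∧
    Real.log ‖z‖ = p.1 ∧ Real.log ‖w‖ = p.2}

/-- The candidate hole `{(x,y) : 2 cosh x + 2 cosh y < |k|}`. -/
def holeF0 (k : ℝ) : Set (ℝ × ℝ) :=
  {p | 2 * Real.cosh p.1 + 2 * Real.cosh p.2 < |k|}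

-- part (i)
lemma notin_amoeba (k x y : ℝ) (h : 2 * Real.cosh x + 2 * Real.cosh y < |k|) :
    (x, y) ∉ amoebaF0 k := by
  rintro ⟨z, w, hz, hw, heq, hx, hy⟩
  have hx' : Real.log (‖z‖) = x := hx
  have hy' : Real.log (‖w‖) = y := hy
  have hzabs : ‖z‖ = Real.exp x := by
    rw [← hx']; exact (Real.exp_log (norm_pos_iff.mpr hz)).symm
  have hwabs : ‖w‖ = Real.exp y := by
    rw [← hy']; exact (Real.exp_log (norm_pos_iff.mpr hw)).symm
  have hk : (k : ℂ) = z + z⁻¹ + w + w⁻¹ := by linear_combination heq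
  have : |k| ≤ Real.exp x + Real.exp (-x) + Real.exp y + Real.exp (-y) := by
    calc |k| = ‖(k : ℂ)‖ := ((Complex.norm_real k).trans (Real.norm_eq_abs k)).symm
    _ = ‖z + z⁻¹ + w + w⁻¹‖ := by rw [hk]
    _ ≤ ‖z‖ + ‖z⁻¹‖ + ‖w‖ + ‖w⁻¹‖ := by
        refine le_trans (norm_add_le _ _) ?_
        refine add_le_add (le_trans (norm_add_le _ _) ?_) le_rfl
        exact add_le_add (norm_add_le _ _) le_rfl
    _ = Real.exp x + Real.exp (-x) + Real.exp y + Real.exp (-y) := by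
        rw [norm_inv, norm_inv, hzabs, hwabs, ← Real.exp_neg, ← Real.exp_neg]
  rw [Real.cosh_eq, Real.cosh_eq] at h
  linarith

-- part (ii)
lemma mem_amoeba (k : ℝ) (hk : k ≠ 0) (x y : ℝ)
    (h : 2 * Real.cosh x + 2 * Real.cosh y = |k|) : (x, y) ∈ amoebaF0 k := by
  set s : ℝ := if 0 ≤ k then 1 else -1 with hs
  have hs1 : s = 1 ∨ s = -1 := by by_cases h0 : 0 ≤ k <;> simp [hs, h0]
  have hss : s * s = 1 := by rcases hs1 with h1 | h1 <;> rw [h1] <;> ring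
  have hsk : s * |k| = k := by
    by_cases h0 : 0 ≤ k
    · simp [hs, h0, abs_of_nonneg h0]
    · simp [hs, h0, abs_of_neg (lt_of_not_ge h0)]
  have hsne : s ≠ 0 := by rcases hs1 with h1 | h1 <;> rw [h1] <;> norm_num
  refine ⟨((s * Real.exp x : ℝ) : ℂ), ((s * Real.exp y : ℝ) : ℂ), ?_, ?_, ?_, ?_, ?_⟩
  · simp [hsne, Real.exp_ne_zero]
  · simp [hsne, Real.exp_ne_zero]
  · have hreal : k - s * Real.exp x - (s * Real.exp x)⁻¹ - s * Real.exp y -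
        (s * Real.exp y)⁻¹ = 0 := by
      have hinvx : (s * Real.exp x)⁻¹ = s * Real.exp (-x) := by
        rw [Real.exp_neg]
        field_simp
        nlinarith [hss, Real.exp_pos x]
      have hinvy : (s * Real.exp y)⁻¹ = s * Real.exp (-y) := by
        rw [Real.exp_neg]
        field_simp
        nlinarith [hss, Real.exp_pos y]
      rw [hinvx, hinvy]
      rw [Real.cosh_eq, Real.cosh_eq] at h
      have hsum : Real.exp x + Real.exp (-x) + Real.exp y + Real.exp (-y) = |k| := by
        linarith
      linear_combination (-s) * hsum - hsk
    push_cast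
    exact_mod_cast congrArg (fun t : ℝ => (t : ℂ)) hreal
  · simp only [Complex.norm_real, Real.norm_eq_abs, abs_mul, Real.abs_exp]
    rcases hs1 with h1 | h1 <;> rw [h1] <;> simp [Real.log_exp]
  · simp only [Complex.norm_real, Real.norm_eq_abs, abs_mul, Real.abs_exp]
    rcases hs1 with h1 | h1 <;> rw [h1] <;> simp [Real.log_exp]

lemma cosh_convex_ineq (a b x1 x2 : ℝ) (ha : 0 ≤ a) (hb : 0 ≤ b) (hab : a + b = 1) :
    Real.cosh (a * x1 + b * x2) ≤ a * Real.cosh x1 + b * Real.cosh x2 := by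
  have h1 := convexOn_exp.2 (Set.mem_univ x1) (Set.mem_univ x2) ha hb hab
  have h2 := convexOn_exp.2 (Set.mem_univ (-x1)) (Set.mem_univ (-x2)) ha hb hab
  simp only [smul_eq_mul] at h1 h2
  rw [Real.cosh_eq, Real.cosh_eq, Real.cosh_eq]
  have : -(a * x1 + b * x2) = a * (-x1) + b * (-x2) := by ring
  rw [this]
  linarith

lemma f_convexOn (k : ℝ) :
    ConvexOn ℝ Set.univ (fun p : ℝ × ℝ => 2 * Real.cosh p.1 + 2 * Real.cosh p.2) := by
  refine ⟨convex_univ, ?_⟩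
  rintro ⟨x1, y1⟩ - ⟨x2, y2⟩ - a b ha hb hab
  simp only [Prod.smul_mk, Prod.mk_add_mk, smul_eq_mul]
  have c1 := cosh_convex_ineq a b x1 x2 ha hb hab
  have c2 := cosh_convex_ineq a b y1 y2 ha hb hab
  linarith

lemma hole_convex (k : ℝ) : Convex ℝ (holeF0 k) := by
  have h := (f_convexOn k).convex_lt |k|
  have he : holeF0 k = {x ∈ Set.univ |
      (fun p : ℝ × ℝ => 2 * Real.cosh p.1 + 2 * Real.cosh p.2) x < |k|} := by
    ext p; simp [holeF0]
  rw [he]; exact h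

lemma hole_open (k : ℝ) : IsOpen (holeF0 k) := by
  have : holeF0 k = (fun p : ℝ × ℝ => 2 * Real.cosh p.1 + 2 * Real.cosh p.2) ⁻¹'
      (Set.Iio |k|) := rfl
  rw [this]
  exact IsOpen.preimage (by continuity) isOpen_Iio

lemma closure_hole (k : ℝ) (h4 : 4 < |k|) :
    closure (holeF0 k) = {p : ℝ × ℝ | 2 * Real.cosh p.1 + 2 * Real.cosh p.2 ≤ |k|} := by
  apply Set.Subset.antisymm
  · have hcl : IsClosed {p : ℝ × ℝ | 2 * Real.cosh p.1 + 2 * Real.cosh p.2 ≤ |k|} := by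
      have : {p : ℝ × ℝ | 2 * Real.cosh p.1 + 2 * Real.cosh p.2 ≤ |k|} =
          (fun p : ℝ × ℝ => 2 * Real.cosh p.1 + 2 * Real.cosh p.2) ⁻¹' (Set.Iic |k|) := rfl
      rw [this]; exact IsClosed.preimage (by continuity) isClosed_Iic
    exact closure_minimal (fun p (hp : 2 * Real.cosh p.1 + 2 * Real.cosh p.2 < |k|) =>
      hp.le) hcl
  · rintro ⟨x, y⟩ hp
    simp only [Set.mem_setOf_eq] at hp
    rcases lt_or_eq_of_le hp with hlt | heq
    · exact subset_closure hlt
    · -- boundary point: approximate by scaled points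
      have hne : ¬(x = 0 ∧ y = 0) := by
        rintro ⟨rfl, rfl⟩
        simp [Real.cosh_zero] at heq
        linarith
      apply mem_closure_iff_seq_limit.2
      refine ⟨fun n => ((1 - 1 / (n + 1 : ℝ)) * x, (1 - 1 / (n + 1 : ℝ)) * y), ?_, ?_⟩
      · intro n
        have hn1 : (0 : ℝ) < (n : ℝ) + 1 := by positivity
        have hd1 : 1 / ((n : ℝ) + 1) ≤ 1 := by
          rw [div_le_one hn1]; linarith [Nat.cast_nonneg (α := ℝ) n]
        have hd0 : 0 < 1 / ((n : ℝ) + 1) := by positivity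
        obtain ⟨t, ht, ht0, ht1⟩ : ∃ t : ℝ, t = 1 - 1 / ((n : ℝ) + 1) ∧ 0 ≤ t ∧ t < 1 :=
          ⟨1 - 1 / ((n : ℝ) + 1), rfl, by linarith, by linarith⟩
        show ((1 - 1 / ((n : ℝ) + 1)) * x, (1 - 1 / ((n : ℝ) + 1)) * y) ∈ holeF0 k
        rw [show (1 - 1 / ((n : ℝ) + 1)) = t from ht.symm]
        have hle : ∀ u : ℝ, Real.cosh (t * u) ≤ Real.cosh u := by
          intro u
          apply Real.cosh_le_cosh.2
          rw [abs_mul, abs_of_nonneg ht0]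
          nlinarith [abs_nonneg u]
        have hlt : ∀ u : ℝ, u ≠ 0 → Real.cosh (t * u) < Real.cosh u := by
          intro u hu
          apply Real.cosh_lt_cosh.2
          rw [abs_mul, abs_of_nonneg ht0]
          have : 0 < |u| := abs_pos.2 hu
          nlinarith
        show 2 * Real.cosh (t * x) + 2 * Real.cosh (t * y) < |k|
        rw [← heq]
        by_cases hx : x = 0
        · have hy : y ≠ 0 := fun hy => hne ⟨hx, hy⟩
          have := hlt y hy
          have := hle x
          linarith
        · have := hlt x hx
          have := hle y
          linarith
      · have hc : Filter.Tendsto (fun n : ℕ => 1 - 1 / (n + 1 : ℝ)) Filter.atTop (nhds 1) := by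
          have := tendsto_one_div_add_atTop_nhds_zero_nat (𝕜 := ℝ)
          have h := Filter.Tendsto.const_sub (1 : ℝ) this
          simpa using h
        have hx : Filter.Tendsto (fun n : ℕ => (1 - 1 / (n + 1 : ℝ)) * x)
            Filter.atTop (nhds x) := by
          have := hc.mul_const x
          simpa using this
        have hy : Filter.Tendsto (fun n : ℕ => (1 - 1 / (n + 1 : ℝ)) * y)
            Filter.atTop (nhds y) := by
          have := hc.mul_const y
          simpa using this
        exact hx.prodMk_nhds hy

/-- For `P(z,w) = k - z - z⁻¹ - w - w⁻¹`:
(i) points with `2 cosh x + 2 cosh y < |k|` are not in the amoeba;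
(ii) if `k ≠ 0`, points with `2 cosh x + 2 cosh y = |k|` are in the amoeba;
and for `|k| > 4` the set `{2 cosh x + 2 cosh y < |k|}` is a nonempty bounded
complement component (hole) of the amoeba, whose boundary is the curve
`x = ln ||k|/2 − cosh y ± √((|k|/2 − cosh y)² − 1)|`. -/
theorem amoeba_hole_F0 (k : ℝ) :
    (∀ x y : ℝ, 2 * Real.cosh x + 2 * Real.cosh y < |k| → (x, y) ∉ amoebaF0 k) ∧
    (k ≠ 0 → ∀ x y : ℝ, 2 * Real.cosh x + 2 * Real.cosh y = |k| → (x, y) ∈ amoebaF0 k) ∧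
    (4 < |k| →
      (holeF0 k).Nonempty ∧
      Bornology.IsBounded (holeF0 k) ∧
      (∀ p ∈ holeF0 k, connectedComponentIn (amoebaF0 k)ᶜ p = holeF0 k) ∧
      frontier (holeF0 k) = {p : ℝ × ℝ | 2 * Real.cosh p.1 + 2 * Real.cosh p.2 = |k|} ∧
      ∀ p ∈ frontier (holeF0 k), ∃ ε : ℝ, (ε = 1 ∨ ε = -1) ∧
        p.1 = Real.log |(|k| / 2 - Real.cosh p.2) +
          ε * Real.sqrt ((|k| / 2 - Real.cosh p.2) ^ 2 - 1)|) := by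
  refine ⟨fun x y h => notin_amoeba k x y h, fun hk x y h => mem_amoeba k hk x y h, fun h4 => ?_⟩
  have hkne : k ≠ 0 := by
    intro h; rw [h] at h4; simp at h4; linarith
  have hsub : holeF0 k ⊆ (amoebaF0 k)ᶜ := by
    rintro ⟨x, y⟩ hp
    exact notin_amoeba k x y hp
  have hfront : frontier (holeF0 k) =
      {p : ℝ × ℝ | 2 * Real.cosh p.1 + 2 * Real.cosh p.2 = |k|} := by
    rw [frontier, closure_hole k h4, (hole_open k).interior_eq]
    ext ⟨x, y⟩
    simp only [Set.mem_diff, Set.mem_setOf_eq, holeF0]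
    constructor
    · rintro ⟨h1, h2⟩; exact le_antisymm h1 (not_lt.1 h2)
    · rintro h; exact ⟨le_of_eq h, by rw [h]; exact lt_irrefl _⟩
  refine ⟨⟨(0, 0), ?_⟩, ?_, ?_, hfront, ?_⟩
  · show 2 * Real.cosh 0 + 2 * Real.cosh 0 < |k|
    simp [Real.cosh_zero]; linarith
  · -- bounded
    apply Bornology.IsBounded.subset (Metric.isBounded_closedBall (x := (0 : ℝ × ℝ)) (r := |k|))
    rintro ⟨x, y⟩ hp
    simp only [holeF0, Set.mem_setOf_eq] at hp
    have hb : ∀ u : ℝ, |u| < 2 * Real.cosh u := by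
      intro u
      have h1 : Real.exp |u| ≤ 2 * Real.cosh u := by
        rw [Real.cosh_eq]
        rcases abs_cases u with ⟨h, _⟩ | ⟨h, _⟩ <;> rw [h] <;>
          [skip; rw [Real.exp_neg]] <;> nlinarith [Real.exp_pos u, Real.exp_pos (-u),
            Real.exp_pos (-u)]
      nlinarith [Real.add_one_le_exp |u|, abs_nonneg u]
    have hcx : (0:ℝ) < 2 * Real.cosh x := by positivity
    have hcy : (0:ℝ) < 2 * Real.cosh y := by positivity
    simp only [Metric.mem_closedBall, Prod.dist_eq, dist_zero_right]
    apply max_le <;> simp only [Real.norm_eq_abs] <;>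
      [exact le_of_lt (lt_of_lt_of_le (hb x) (by linarith));
       exact le_of_lt (lt_of_lt_of_le (hb y) (by linarith))]
  · -- connected component
    intro p hp
    apply Set.Subset.antisymm
    · -- component ⊆ hole
      set S := connectedComponentIn (amoebaF0 k)ᶜ p with hS
      have hSpre : IsPreconnected S := isPreconnected_connectedComponentIn
      have hSsub : S ⊆ (amoebaF0 k)ᶜ := connectedComponentIn_subset _ _
      have hpS : p ∈ S := mem_connectedComponentIn (hsub hp)
      by_contra hcon
      rw [Set.not_subset] at hcon
      obtain ⟨q, hqS, hqnh⟩ := hcon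
      set u : Set (ℝ × ℝ) := holeF0 k with hu
      set v : Set (ℝ × ℝ) := {p : ℝ × ℝ | |k| < 2 * Real.cosh p.1 + 2 * Real.cosh p.2} with hv
      have hvop : IsOpen v := by
        have : v = (fun p : ℝ × ℝ => 2 * Real.cosh p.1 + 2 * Real.cosh p.2) ⁻¹'
            (Set.Ioi |k|) := rfl
        rw [this]; exact IsOpen.preimage (by continuity) isOpen_Ioi
      have hScover : S ⊆ u ∪ v := by
        rintro ⟨x, y⟩ hq
        have : 2 * Real.cosh x + 2 * Real.cosh y ≠ |k| := by
          intro heq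
          exact hSsub hq (mem_amoeba k hkne x y heq)
        rcases lt_or_gt_of_ne this with h | h
        · exact Or.inl h
        · exact Or.inr h
      have hqv : q ∈ v := by
        rcases hScover hqS with h | h
        · exact absurd h hqnh
        · exact h
      obtain ⟨r, hrS, hru, hrv⟩ := hSpre u v (hole_open k) hvop hScover ⟨p, hpS, hp⟩ ⟨q, hqS, hqv⟩
      have h1 : 2 * Real.cosh r.1 + 2 * Real.cosh r.2 < |k| := hru
      have h2 : |k| < 2 * Real.cosh r.1 + 2 * Real.cosh r.2 := hrv
      linarith
    · exact IsPreconnected.subset_connectedComponentIn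
        ((hole_convex k).isPreconnected) hp hsub
  · -- boundary curve
    rintro ⟨x, y⟩ hp
    rw [hfront] at hp
    simp only [Set.mem_setOf_eq] at hp
    have ha : |k| / 2 - Real.cosh y = Real.cosh x := by linarith
    rw [ha]
    have hsq : Real.cosh x ^ 2 - 1 = Real.sinh x ^ 2 := by
      have := Real.cosh_sq x; linarith
    rw [hsq, Real.sqrt_sq_eq_abs]
    by_cases hx : 0 ≤ x
    · refine ⟨1, Or.inl rfl, ?_⟩
      show x = _
      rw [abs_of_nonneg (Real.sinh_nonneg_iff.2 hx), one_mul, Real.cosh_add_sinh,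
        Real.abs_exp, Real.log_exp]
    · refine ⟨-1, Or.inr rfl, ?_⟩
      have hx' : x < 0 := lt_of_not_ge hx
      have hsneg : Real.sinh x ≤ 0 := Real.sinh_nonpos_iff.2 hx'.le
      show x = _
      rw [abs_of_nonpos hsneg]
      have : Real.cosh x + -1 * -Real.sinh x = Real.exp x := by
        rw [← Real.cosh_add_sinh]; ring
      rw [this, Real.abs_exp, Real.log_exp]
end

section
/- Let k be a real number and let P(z,w) = k − z − w − z^{-1}w^{-1} be the Newton polynomial of ℙ² (dP₀). For (x,y) ∈ ℝ²: (i) if e^x + e^y + e^{-x-y} < |k| then (x,y) does not belong to the amoeba of P; (ii) if k > 0 and e^x + e^y + e^{-x-y} = k then (x,y) belongs to the amoeba of P. In particular, for k > 3 the set {(x,y) : e^x + e^y + e^{-x-y} < k} is a nonempty bounded complement component (hole) of the amoeba of P. -/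
/-- The amoeba of the `ℙ² (dP₀)` Newton polynomial `P(z,w) = k - z - w - z⁻¹w⁻¹`. -/
def amoebaP2 (k : ℝ) : Set (ℝ × ℝ) :=
  {p | ∃ z w : ℂ, z ≠ 0 ∧ w ≠ 0 ∧ (k : ℂ) - z - w - z⁻¹ * w⁻¹ = 0 ∧
    Real.log ‖z‖ = p.1 ∧ Real.log ‖w‖ = p.2}


noncomputable def fP (p : ℝ × ℝ) : ℝ := Real.exp p.1 + Real.exp p.2 + Real.exp (-p.1 - p.2)

lemma fP_cont : Continuous fP := by unfold fP; fun_prop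

lemma fP_convex (k : ℝ) : Convex ℝ {p : ℝ × ℝ | fP p < k} := by
  intro p hp q hq a b ha hb hab
  simp only [Set.mem_setOf_eq, fP] at *
  have e1 : (a • p + b • q).1 = a * p.1 + b * q.1 := rfl
  have e2 : (a • p + b • q).2 = a * p.2 + b * q.2 := rfl
  rw [e1, e2]
  have h1 := convexOn_exp.2 (Set.mem_univ p.1) (Set.mem_univ q.1) ha hb hab
  have h2 := convexOn_exp.2 (Set.mem_univ p.2) (Set.mem_univ q.2) ha hb hab
  have h3 := convexOn_exp.2 (Set.mem_univ (-p.1 - p.2)) (Set.mem_univ (-q.1 - q.2)) ha hb hab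
  simp only [smul_eq_mul] at h1 h2 h3
  have e3 : -(a * p.1 + b * q.1) - (a * p.2 + b * q.2)
      = a * (-p.1 - p.2) + b * (-q.1 - q.2) := by ring
  rw [e3]
  have hk : a * k + b * k = k := by rw [← add_mul, hab, one_mul]
  rcases eq_or_lt_of_le ha with h|h
  · have ha0 : a = 0 := h.symm
    have hb1 : b = 1 := by linarith
    subst ha0 hb1
    simp only [zero_mul, one_mul, zero_add] at h1 h2 h3 ⊢
    linarith
  · nlinarith [mul_lt_mul_of_pos_left hp h, mul_le_mul_of_nonneg_left hq.le hb, h1, h2, h3, hk]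

lemma not_mem_of_lt (k : ℝ) (x y : ℝ)
    (h : Real.exp x + Real.exp y + Real.exp (-x - y) < |k|) :
    (x, y) ∉ amoebaP2 k := by
  rintro ⟨z, w, hz, hw, heq, hx, hy⟩
  simp only at hx hy
  have hzabs : ‖z‖ = Real.exp x := by
    rw [← hx, Real.exp_log (norm_pos_iff.mpr hz)]
  have hwabs : ‖w‖ = Real.exp y := by
    rw [← hy, Real.exp_log (norm_pos_iff.mpr hw)]
  have hk : (k : ℂ) = z + w + z⁻¹ * w⁻¹ := by linear_combination heq
  have : |k| ≤ Real.exp x + Real.exp y + Real.exp (-x - y) := by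
    calc |k| = ‖(k : ℂ)‖ := by rw [Complex.norm_real, Real.norm_eq_abs]
    _ = ‖z + w + z⁻¹ * w⁻¹‖ := by rw [hk]
    _ ≤ ‖z + w‖ + ‖z⁻¹ * w⁻¹‖ := norm_add_le _ _
    _ ≤ ‖z‖ + ‖w‖ + ‖z⁻¹ * w⁻¹‖ := by
        linarith [norm_add_le z w]
    _ = Real.exp x + Real.exp y + Real.exp (-x - y) := by
        rw [norm_mul, norm_inv, norm_inv, hzabs, hwabs, ← Real.exp_neg, ← Real.exp_neg,
          ← Real.exp_add]
        ring_nf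
  linarith

lemma mem_of_eq (k : ℝ) (_hk : 0 < k) (x y : ℝ)
    (h : Real.exp x + Real.exp y + Real.exp (-x - y) = k) :
    (x, y) ∈ amoebaP2 k := by
  refine ⟨(Real.exp x : ℝ), (Real.exp y : ℝ), ?_, ?_, ?_, ?_, ?_⟩
  · exact_mod_cast Real.exp_ne_zero x
  · exact_mod_cast Real.exp_ne_zero y
  · have hr : k - Real.exp x - Real.exp y - (Real.exp x)⁻¹ * (Real.exp y)⁻¹ = 0 := by
      rw [← Real.exp_neg, ← Real.exp_neg, ← Real.exp_add]
      have : -x + -y = -x - y := by ring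
      rw [this]; linarith
    push_cast
    exact_mod_cast congrArg (fun t : ℝ => (t : ℂ)) hr
  · simp [abs_of_pos (Real.exp_pos x), Real.log_exp]
  · simp [abs_of_pos (Real.exp_pos y), Real.log_exp]
/-- For `P(z,w) = k - z - w - z⁻¹w⁻¹`:
(i) points with `eˣ + eʸ + e^{-x-y} < |k|` are not in the amoeba;
(ii) if `k > 0`, points with `eˣ + eʸ + e^{-x-y} = k` are in the amoeba;
and for `k > 3` the set `{eˣ + eʸ + e^{-x-y} < k}` is a nonempty bounded complement
component (hole) of the amoeba. -/
theorem amoeba_hole_P2 (k : ℝ) :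
    (∀ x y : ℝ, Real.exp x + Real.exp y + Real.exp (-x - y) < |k| →
      (x, y) ∉ amoebaP2 k) ∧
    (0 < k → ∀ x y : ℝ, Real.exp x + Real.exp y + Real.exp (-x - y) = k →
      (x, y) ∈ amoebaP2 k) ∧
    (3 < k →
      ({p : ℝ × ℝ | Real.exp p.1 + Real.exp p.2 + Real.exp (-p.1 - p.2) < k}).Nonempty ∧
      Bornology.IsBounded
        {p : ℝ × ℝ | Real.exp p.1 + Real.exp p.2 + Real.exp (-p.1 - p.2) < k} ∧
      ∀ p ∈ {p : ℝ × ℝ | Real.exp p.1 + Real.exp p.2 + Real.exp (-p.1 - p.2) < k},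
        connectedComponentIn (amoebaP2 k)ᶜ p =
          {p : ℝ × ℝ | Real.exp p.1 + Real.exp p.2 + Real.exp (-p.1 - p.2) < k}) := by
  refine ⟨fun x y h => not_mem_of_lt k x y h,
    fun hk x y h => mem_of_eq k hk x y h, fun hk3 => ?_⟩
  have hkpos : (0 : ℝ) < k := by linarith
  have hUeq : {p : ℝ × ℝ | Real.exp p.1 + Real.exp p.2 + Real.exp (-p.1 - p.2) < k}
      = {p : ℝ × ℝ | fP p < k} := rfl
  rw [hUeq]
  have hlogpos : (0 : ℝ) < Real.log k := Real.log_pos (by linarith)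
  have hUsub : {p : ℝ × ℝ | fP p < k} ⊆ (amoebaP2 k)ᶜ := by
    intro q hq
    have := not_mem_of_lt k q.1 q.2 (by rw [abs_of_pos hkpos]; exact hq)
    simpa using this
  refine ⟨⟨(0, 0), by simp [fP]; norm_num; linarith⟩, ?_, ?_⟩
  · apply Bornology.IsBounded.subset
      ((Metric.isBounded_Icc (-(2 * Real.log k)) (Real.log k)).prod
        (Metric.isBounded_Icc (-(2 * Real.log k)) (Real.log k)))
    intro q hq
    simp only [Set.mem_setOf_eq, fP] at hq
    have h1 : q.1 < Real.log k := by
      rw [Real.lt_log_iff_exp_lt hkpos]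
      have := Real.exp_pos q.2; have := Real.exp_pos (-q.1 - q.2); linarith
    have h2 : q.2 < Real.log k := by
      rw [Real.lt_log_iff_exp_lt hkpos]
      have := Real.exp_pos q.1; have := Real.exp_pos (-q.1 - q.2); linarith
    have h3 : -q.1 - q.2 < Real.log k := by
      rw [Real.lt_log_iff_exp_lt hkpos]
      have := Real.exp_pos q.1; have := Real.exp_pos q.2; linarith
    simp only [Set.mem_prod, Set.mem_Icc]
    exact ⟨⟨by linarith, h1.le⟩, by linarith, h2.le⟩
  · intro p hp
    apply subset_antisymm
    · intro q hq
      have hqF : q ∈ (amoebaP2 k)ᶜ := connectedComponentIn_subset _ _ hq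
      by_contra hqU
      simp only [Set.mem_setOf_eq, not_lt] at hqU
      rcases eq_or_lt_of_le hqU with heq | hlt
      · exact hqF (by simpa using mem_of_eq k hkpos q.1 q.2 heq.symm)
      · have hpF : p ∈ (amoebaP2 k)ᶜ := hUsub hp
        have hpmem : p ∈ connectedComponentIn (amoebaP2 k)ᶜ p := mem_connectedComponentIn hpF
        have hIcc := (isPreconnected_connectedComponentIn).intermediate_value hpmem hq
          fP_cont.continuousOn
        have hkmem : k ∈ Set.Icc (fP p) (fP q) := ⟨le_of_lt hp, le_of_lt hlt⟩
        obtain ⟨c, hc, hfc⟩ := hIcc hkmem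
        have : c ∈ amoebaP2 k := by simpa using mem_of_eq k hkpos c.1 c.2 hfc
        exact connectedComponentIn_subset _ _ hc this
    · exact (fP_convex k).isPreconnected.subset_connectedComponentIn hp hUsub
end

section
/- Let p(z,w) be a Laurent polynomial in two complex variables, and let M = max_{|z|=|w|=1} |p(z,w)|. Then the function k ↦ m(k − p) is strictly increasing on the interval (M, ∞) of real k, where m denotes the Mahler measure. That is, for real numbers k₂ > k₁ > M one has m(k₁ − p(z,w)) < m(k₂ − p(z,w)). -/
/-- For a two-variable Laurent polynomial `p` with `M = max_{|z|=|w|=1} |p(z,w)|`, the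
Mahler measure `k ↦ m(k − p)` is strictly increasing on `(M, ∞)`. -/
theorem mahler_strictly_increasing
    (N : ℕ) (c : Fin N → ℂ) (a b : Fin N → ℤ)
    (p : ℂ → ℂ → ℂ)
    (hp : ∀ z w : ℂ, p z w = ∑ j, c j * z ^ (a j) * w ^ (b j))
    (M : ℝ)
    (hM : IsGreatest {x : ℝ | ∃ θ φ : ℝ,
      x = ‖p (Complex.exp (Complex.I * (θ : ℂ)))
        (Complex.exp (Complex.I * (φ : ℂ)))‖} M)
    (m : ℝ → ℝ)
    (hm : ∀ k : ℝ, m k = (1 / (2 * Real.pi) ^ 2) *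
      ∫ θ in (0 : ℝ)..(2 * Real.pi), ∫ φ in (0 : ℝ)..(2 * Real.pi),
        Real.log ‖(k : ℂ) -
          p (Complex.exp (Complex.I * (θ : ℂ))) (Complex.exp (Complex.I * (φ : ℂ)))‖) :
    ∀ k₁ k₂ : ℝ, M < k₁ → k₁ < k₂ → m k₁ < m k₂ := by
  intro k₁ k₂ hk₁ hk₁₂
  set P : ℝ → ℝ → ℂ := fun θ φ =>
    p (Complex.exp (Complex.I * (θ : ℂ))) (Complex.exp (Complex.I * (φ : ℂ))) with hP
  -- joint continuity of P
  have hPc : Continuous (Function.uncurry P) := by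
    have : Function.uncurry P = fun x : ℝ × ℝ =>
        ∑ j, c j * (Complex.exp (Complex.I * (x.1 : ℂ))) ^ (a j)
          * (Complex.exp (Complex.I * (x.2 : ℂ))) ^ (b j) := by
      funext x; exact hp _ _
    rw [this]
    refine continuous_finset_sum _ fun j _ => ?_
    have h1 : Continuous fun x : ℝ × ℝ => Complex.exp (Complex.I * (x.1 : ℂ)) := by fun_prop
    have h2 : Continuous fun x : ℝ × ℝ => Complex.exp (Complex.I * (x.2 : ℂ)) := by fun_prop
    exact (continuous_const.mul (h1.zpow₀ _ fun x => Or.inl (Complex.exp_ne_zero _))).mul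
      (h2.zpow₀ _ fun x => Or.inl (Complex.exp_ne_zero _))
  -- bound on |P|
  have hbound : ∀ θ φ : ℝ, ‖P θ φ‖ ≤ M := fun θ φ =>
    hM.2 ⟨θ, φ, rfl⟩
  -- positivity of |k - P| for k > M
  have hpos : ∀ k : ℝ, M < k → ∀ θ φ : ℝ, 0 < ‖(k : ℂ) - P θ φ‖ := by
    intro k hk θ φ
    have h1 : ‖(k : ℂ)‖ - ‖P θ φ‖ ≤ ‖(k : ℂ) - P θ φ‖ := by
      simpa using norm_sub_norm_le (k : ℂ) (P θ φ)
    have hMk : (0:ℝ) ≤ M := le_trans (norm_nonneg _) (hbound 0 0)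
    have : ‖(k : ℂ)‖ = k := by
      rw [Complex.norm_real, Real.norm_eq_abs]; exact abs_of_pos (lt_of_le_of_lt hMk hk)
    nlinarith [hbound θ φ]
  -- pointwise strict inequality of logs
  have key : ∀ θ φ : ℝ,
      Real.log ‖(k₁ : ℂ) - P θ φ‖ < Real.log ‖(k₂ : ℂ) - P θ φ‖ := by
    intro θ φ
    refine Real.log_lt_log (hpos k₁ hk₁ θ φ) ?_
    set q := P θ φ
    have hre : q.re ≤ M := le_trans (Complex.re_le_norm q) (hbound θ φ)
    rw [Complex.norm_def, Complex.norm_def]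
    refine Real.sqrt_lt_sqrt (Complex.normSq_nonneg _) ?_
    simp only [Complex.normSq_apply, Complex.sub_re, Complex.sub_im, Complex.ofReal_re,
      Complex.ofReal_im]
    nlinarith
  -- joint continuity of the log-integrand
  have hlogc : ∀ k : ℝ, M < k →
      Continuous fun x : ℝ × ℝ => Real.log ‖(k : ℂ) - P x.1 x.2‖ := by
    intro k hk
    have habs : Continuous fun x : ℝ × ℝ => ‖(k : ℂ) - P x.1 x.2‖ :=
      continuous_norm.comp (continuous_const.sub hPc)
    rw [continuous_iff_continuousAt]
    intro x
    exact (habs.continuousAt).log (ne_of_gt (hpos k hk x.1 x.2))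
  -- inner integrals
  set G : ℝ → ℝ → ℝ := fun k θ =>
    ∫ φ in (0:ℝ)..(2 * Real.pi), Real.log ‖(k : ℂ) - P θ φ‖ with hG
  have hGc : ∀ k : ℝ, M < k → Continuous (G k) := by
    intro k hk
    exact intervalIntegral.continuous_parametric_intervalIntegral_of_continuous'
      (f := fun θ φ => Real.log ‖(k : ℂ) - P θ φ‖) (hlogc k hk) 0 (2 * Real.pi)
  have hk₂ : M < k₂ := hk₁.trans hk₁₂
  have hinner : ∀ θ : ℝ, G k₁ θ < G k₂ θ := by
    intro θ
    refine intervalIntegral.integral_lt_integral_of_continuousOn_of_le_of_exists_lt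
      Real.two_pi_pos ?_ ?_ (fun φ _ => (key θ φ).le) ⟨0, ⟨le_refl 0, Real.two_pi_pos.le⟩, key θ 0⟩
    · exact ((hlogc k₁ hk₁).comp (Continuous.prodMk_right θ)).continuousOn
    · exact ((hlogc k₂ hk₂).comp (Continuous.prodMk_right θ)).continuousOn
  have houter : (∫ θ in (0:ℝ)..(2 * Real.pi), G k₁ θ) < ∫ θ in (0:ℝ)..(2 * Real.pi), G k₂ θ := by
    refine intervalIntegral.integral_lt_integral_of_continuousOn_of_le_of_exists_lt
      Real.two_pi_pos (hGc k₁ hk₁).continuousOn (hGc k₂ hk₂).continuousOn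
      (fun θ _ => (hinner θ).le) ⟨0, ⟨le_refl 0, Real.two_pi_pos.le⟩, hinner 0⟩
  have hC : (0:ℝ) < 1 / (2 * Real.pi) ^ 2 := by positivity
  rw [hm k₁, hm k₂]
  exact mul_lt_mul_of_pos_left houter hC
end

section
/- Let p(z,w) be a Laurent polynomial in two complex variables, let M = max_{|z|=|w|=1} |p(z,w)|, and for n ≥ 1 let a_n = (2π)^{-2} ∫₀^{2π} ∫₀^{2π} p(e^{iθ}, e^{iφ})^n dθ dφ (the constant Laurent coefficient of p^n). Then for every real k > M the series Σ_{n≥1} a_n/(n k^n) converges absolutely and the Mahler measure satisfies m(k − p) = log k − Re( Σ_{n=1}^{∞} a_n/(n k^n) ). -/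
open MeasureTheory

private lemma ml_double {E : Type*} [NormedAddCommGroup E] [NormedSpace ℝ E] (g : ℝ × ℝ → E)
    (hg : Integrable g (((volume : Measure ℝ).restrict (Set.Ioc 0 (2*Real.pi))).prod
      ((volume : Measure ℝ).restrict (Set.Ioc 0 (2*Real.pi))))) :
    (∫ θ in (0:ℝ)..(2*Real.pi), ∫ φ in (0:ℝ)..(2*Real.pi), g (θ, φ)) =
      ∫ q, g q ∂(((volume : Measure ℝ).restrict (Set.Ioc 0 (2*Real.pi))).prod
      ((volume : Measure ℝ).restrict (Set.Ioc 0 (2*Real.pi)))) := by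
  have h0 : (0:ℝ) ≤ 2*Real.pi := by positivity
  rw [intervalIntegral.integral_of_le h0]
  simp_rw [intervalIntegral.integral_of_le h0]
  rw [MeasureTheory.integral_integral (f := fun x y => g (x, y))
    (by exact hg)]

/-- For a two-variable Laurent polynomial `p` with `M = max_{|z|=|w|=1} |p|` and
`a n` the constant Laurent coefficient of `pⁿ`, for every real `k > M` the series
`∑_{n≥1} a n / (n kⁿ)` converges absolutely and
`m(k − p) = log k − Re (∑_{n≥1} a n / (n kⁿ))`. -/
theorem mahler_expansion
    (N : ℕ) (c : Fin N → ℂ) (a b : Fin N → ℤ)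
    (p : ℂ → ℂ → ℂ)
    (hp : ∀ z w : ℂ, p z w = ∑ j, c j * z ^ (a j) * w ^ (b j))
    (M : ℝ)
    (hM : IsGreatest {x : ℝ | ∃ θ φ : ℝ,
      x = ‖p (Complex.exp (Complex.I * (θ : ℂ)))
        (Complex.exp (Complex.I * (φ : ℂ)))‖} M)
    (m : ℝ → ℝ)
    (hm : ∀ k : ℝ, m k = (1 / (2 * Real.pi) ^ 2) *
      ∫ θ in (0 : ℝ)..(2 * Real.pi), ∫ φ in (0 : ℝ)..(2 * Real.pi),
        Real.log (‖(k : ℂ) -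
          p (Complex.exp (Complex.I * (θ : ℂ))) (Complex.exp (Complex.I * (φ : ℂ)))‖))
    (A : ℕ → ℂ)
    (hA : ∀ n : ℕ, A n = ((1 : ℂ) / (2 * Real.pi) ^ 2) *
      ∫ θ in (0 : ℝ)..(2 * Real.pi), ∫ φ in (0 : ℝ)..(2 * Real.pi),
        (p (Complex.exp (Complex.I * (θ : ℂ))) (Complex.exp (Complex.I * (φ : ℂ)))) ^ n) :
    ∀ k : ℝ, M < k →
      Summable (fun n : ℕ => ‖A (n + 1)‖ / ((n + 1) * k ^ (n + 1))) ∧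
      m k = Real.log k -
        (∑' n : ℕ, A (n + 1) / (((n : ℂ) + 1) * (k : ℂ) ^ (n + 1))).re := by
  intro k hk
  have h2π : (0:ℝ) < 2 * Real.pi := by positivity
  -- basic positivity facts
  have hM0 : 0 ≤ M := by
    obtain ⟨θ, φ, hx⟩ := hM.1
    rw [hx]; positivity
  have hk0 : (0:ℝ) < k := lt_of_le_of_lt hM0 hk
  set r : ℝ := M / k with hr
  have hr0 : 0 ≤ r := div_nonneg hM0 hk0.le
  have hr1 : r < 1 := (div_lt_one hk0).2 hk
  -- the function on the torus
  set F : ℝ × ℝ → ℂ := fun q => p (Complex.exp (Complex.I * (q.1 : ℂ)))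
    (Complex.exp (Complex.I * (q.2 : ℂ))) with hF
  have hFc : Continuous F := by
    have hFeq : F = fun q : ℝ × ℝ => ∑ j, c j * Complex.exp (Complex.I * (q.1 : ℂ)) ^ (a j) *
        Complex.exp (Complex.I * (q.2 : ℂ)) ^ (b j) := funext fun q => hp _ _
    rw [hFeq]
    refine continuous_finset_sum _ fun j _ => ?_
    have h1 : Continuous fun q : ℝ × ℝ => Complex.exp (Complex.I * (q.1 : ℂ)) :=
      Complex.continuous_exp.comp (continuous_const.mul
        (Complex.continuous_ofReal.comp continuous_fst))
    have h2 : Continuous fun q : ℝ × ℝ => Complex.exp (Complex.I * (q.2 : ℂ)) :=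
      Complex.continuous_exp.comp (continuous_const.mul
        (Complex.continuous_ofReal.comp continuous_snd))
    exact ((continuous_const.mul (h1.zpow₀ _ fun q => Or.inl (Complex.exp_ne_zero _))).mul
      (h2.zpow₀ _ fun q => Or.inl (Complex.exp_ne_zero _)))
  have hFM : ∀ q : ℝ × ℝ, ‖F q‖ ≤ M := fun q => hM.2 ⟨q.1, q.2, rfl⟩
  -- the measure
  set ν : Measure ℝ := volume.restrict (Set.Ioc 0 (2*Real.pi)) with hν
  haveI : IsFiniteMeasure ν := by
    constructor
    rw [hν, Measure.restrict_apply_univ, Real.volume_Ioc]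
    exact ENNReal.ofReal_lt_top
  set μ : Measure (ℝ × ℝ) := ν.prod ν with hμ
  have hμuniv : μ.real Set.univ = (2*Real.pi)^2 := by
    rw [measureReal_def, hμ, ← Set.univ_prod_univ, Measure.prod_prod, hν, Measure.restrict_apply_univ,
      Real.volume_Ioc, sub_zero, ← ENNReal.ofReal_mul h2π.le, ENNReal.toReal_ofReal (by positivity)]
    ring
  -- integrability of continuous bounded functions
  have hint : ∀ (f : ℝ × ℝ → ℂ) (C : ℝ), Continuous f → (∀ q, ‖f q‖ ≤ C) →
      Integrable f μ := fun f C hc hb =>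
    (integrable_const C).mono' hc.aestronglyMeasurable
      (Filter.Eventually.of_forall fun q => by exact hb q)
  -- norms of F q / k
  have hu : ∀ q, ‖F q / (k:ℂ)‖ ≤ r := by
    intro q
    rw [norm_div, Complex.norm_real, Real.norm_eq_abs,
      abs_of_pos hk0, hr]
    gcongr
    exact hFM q
  have hu1 : ∀ q, ‖F q / (k:ℂ)‖ < 1 := fun q => lt_of_le_of_lt (hu q) hr1
  have hlb : ∀ q, 1 - r ≤ ‖1 - F q / k‖ := by
    intro q
    have := norm_sub_norm_le (1 : ℂ) (F q / k)
    rw [norm_one] at this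
    linarith [hu q]
  have hub : ∀ q, ‖1 - F q / k‖ ≤ 1 + r := by
    intro q
    have := norm_sub_le (1 : ℂ) (F q / k)
    rw [norm_one] at this
    linarith [hu q]
  have hr1' : (0:ℝ) < 1 - r := by linarith
  have hne : ∀ q, (1 : ℂ) - F q / k ≠ 0 := by
    intro q h
    have := hlb q
    rw [h, norm_zero] at this
    linarith
  -- the log of the factored term
  have hlog : ∀ q, Real.log ‖(k:ℂ) - F q‖ =
      Real.log k + (Complex.log (1 - F q / k)).re := by
    intro q
    have hkC : (k:ℂ) ≠ 0 := by exact_mod_cast hk0.ne'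
    have h1 : (k:ℂ) - F q = (k:ℂ) * (1 - F q / k) := by
      rw [mul_sub, mul_one, mul_div_cancel₀ _ hkC]
    rw [h1, norm_mul, Complex.norm_real, Real.norm_eq_abs, abs_of_pos hk0,
      Real.log_mul (ne_of_gt hk0) (ne_of_gt (lt_of_lt_of_le hr1' (hlb q))), Complex.log_re]
  -- pointwise power series
  have key : ∀ q, HasSum (fun n : ℕ => (F q)^(n+1) / (((n:ℂ)+1) * (k:ℂ)^(n+1)))
      (-(Complex.log (1 - F q / k))) := by
    intro q
    have h0 := Complex.hasSum_taylorSeries_neg_log (hu1 q)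
    have h1 := (hasSum_nat_add_iff' (f := fun n : ℕ => (F q / k)^n / (n:ℂ)) 1).mpr h0
    simp only [Finset.range_one, Finset.sum_singleton, pow_zero, Nat.cast_zero, div_zero,
      sub_zero] at h1
    refine h1.congr_fun fun n => ?_
    push_cast
    rw [div_pow, div_div]
    ring_nf
  -- continuity and integrability of the complex log term
  have hSlogC : Continuous fun q => Complex.log (1 - F q / k) := by
    rw [continuous_iff_continuousAt]
    intro q
    have hc2 : ContinuousAt Complex.log (1 - F q / k) := by
      apply continuousAt_clog
      rw [Complex.mem_slitPlane_iff]
      left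
      have h1 : ((1:ℂ) - F q / k).re = 1 - (F q / k).re := by simp
      rw [h1]
      have h2 : (F q / k).re ≤ ‖F q / k‖ := Complex.re_le_norm _
      linarith [hu q]
    exact ContinuousAt.comp (g := Complex.log) (f := fun q : ℝ × ℝ => 1 - F q / (k:ℂ)) hc2
      ((continuous_const.sub (hFc.div_const _)).continuousAt)
  have hSlogBd : ∀ q, ‖Complex.log (1 - F q / k)‖ ≤
      (max |Real.log (1 - r)| |Real.log (1 + r)|) + Real.pi := by
    intro q
    have h1 := Complex.norm_le_abs_re_add_abs_im (Complex.log (1 - F q / k))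
    have h2 : |(Complex.log (1 - F q / k)).re| ≤ max |Real.log (1 - r)| |Real.log (1 + r)| := by
      rw [Complex.log_re]
      exact abs_le_max_abs_abs (Real.log_le_log hr1' (hlb q))
        ((Real.log_le_log (lt_of_lt_of_le hr1' (hlb q)) (hub q)))
    have h3 : |(Complex.log (1 - F q / k)).im| ≤ Real.pi := by
      rw [Complex.log_im]
      exact Complex.abs_arg_le_pi _
    exact h1.trans (add_le_add h2 h3)
  have hSlogInt : Integrable (fun q => Complex.log (1 - F q / k)) μ :=
    hint _ _ hSlogC hSlogBd
  -- integrability of the terms of the series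
  have hGc : ∀ n : ℕ, Continuous fun q => (F q)^(n+1) / (((n:ℂ)+1) * (k:ℂ)^(n+1)) :=
    fun n => (hFc.pow (n+1)).div_const _
  have hGbd : ∀ n : ℕ, ∀ q, ‖(F q)^(n+1) / (((n:ℂ)+1) * (k:ℂ)^(n+1))‖ ≤ r^(n+1) := by
    intro n q
    rw [norm_div, norm_pow, norm_mul, norm_pow, Complex.norm_real, Real.norm_eq_abs, abs_of_pos hk0]
    have hd : (1:ℝ) ≤ ‖(n:ℂ)+1‖ := by
      have : ((n:ℂ)+1) = ((n+1 : ℕ) : ℂ) := by push_cast; ring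
      rw [this, Complex.norm_natCast]
      exact_mod_cast Nat.one_le_iff_ne_zero.2 (Nat.succ_ne_zero n)
    have hkpow : (0:ℝ) < k^(n+1) := by positivity
    calc ‖F q‖^(n+1) / (‖(n:ℂ)+1‖ * k^(n+1))
        ≤ M^(n+1) / (1 * k^(n+1)) := by
          apply div_le_div₀ (by positivity) (pow_le_pow_left₀ (norm_nonneg _) (hFM q) _)
            (by positivity)
          exact mul_le_mul_of_nonneg_right hd hkpow.le
      _ = r^(n+1) := by rw [one_mul, hr, div_pow]
  have hGint : ∀ n : ℕ, Integrable (fun q => (F q)^(n+1) / (((n:ℂ)+1) * (k:ℂ)^(n+1))) μ :=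
    fun n => hint _ _ (hGc n) (hGbd n)
  -- summability of the integrals of norms
  have hgeom : Summable (fun n : ℕ => (2*Real.pi)^2 * r^(n+1)) := by
    have := (summable_geometric_of_lt_one hr0 hr1).mul_left ((2*Real.pi)^2 * r)
    refine this.congr fun n => ?_
    rw [pow_succ]
    ring
  have hnormint : ∀ n : ℕ,
      (∫ q, ‖(F q)^(n+1) / (((n:ℂ)+1) * (k:ℂ)^(n+1))‖ ∂μ) ≤ (2*Real.pi)^2 * r^(n+1) := by
    intro n
    have h1 : (∫ q, ‖(F q)^(n+1) / (((n:ℂ)+1) * (k:ℂ)^(n+1))‖ ∂μ) ≤ ∫ _q, r^(n+1) ∂μ := by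
      apply integral_mono (hGint n).norm (integrable_const _)
      intro q
      exact hGbd n q
    rw [integral_const, smul_eq_mul, hμuniv] at h1
    exact h1
  have hsumnorm : Summable (fun n : ℕ =>
      ∫ q, ‖(F q)^(n+1) / (((n:ℂ)+1) * (k:ℂ)^(n+1))‖ ∂μ) :=
    Summable.of_nonneg_of_le (fun n => integral_nonneg fun q => norm_nonneg _)
      hnormint hgeom
  -- swap sum and integral
  have hswap := MeasureTheory.hasSum_integral_of_summable_integral_norm hGint hsumnorm
  -- compute the integrals of powers in terms of A
  have h2πC : ((2:ℂ) * Real.pi)^2 ≠ 0 := by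
    apply pow_ne_zero
    apply mul_ne_zero two_ne_zero
    exact_mod_cast Real.pi_ne_zero
  have hAint : ∀ nn : ℕ, (∫ q, (F q)^nn ∂μ) = ((2:ℂ) * Real.pi)^2 * A nn := by
    intro nn
    have h1 : (∫ θ in (0:ℝ)..(2*Real.pi), ∫ φ in (0:ℝ)..(2*Real.pi),
        (p (Complex.exp (Complex.I * (θ:ℂ))) (Complex.exp (Complex.I * (φ:ℂ))))^nn) =
        ∫ q, (F q)^nn ∂μ :=
      ml_double (fun q => (F q)^nn) (hint _ (M^nn) (hFc.pow nn)
        (fun q => by rw [norm_pow]; exact pow_le_pow_left₀ (norm_nonneg _) (hFM q) _))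
    rw [hA nn, h1, ← mul_assoc, mul_one_div, div_self h2πC, one_mul]
  -- rewrite the terms of the swapped sum
  have hterm : ∀ n : ℕ, (∫ q, (F q)^(n+1) / (((n:ℂ)+1) * (k:ℂ)^(n+1)) ∂μ) =
      ((2:ℂ) * Real.pi)^2 * (A (n+1) / (((n:ℂ)+1) * (k:ℂ)^(n+1))) := by
    intro n
    rw [integral_div, hAint (n+1), mul_div_assoc]
  rw [funext hterm] at hswap
  have hAsum : HasSum (fun n : ℕ => A (n+1) / (((n:ℂ)+1) * (k:ℂ)^(n+1)))
      ((∫ q, (∑' n : ℕ, (F q)^(n+1) / (((n:ℂ)+1) * (k:ℂ)^(n+1))) ∂μ) / ((2:ℂ) * Real.pi)^2) := by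
    have h := hswap.mul_left ((((2:ℂ) * Real.pi)^2)⁻¹)
    simp only [inv_mul_cancel_left₀ h2πC] at h
    rwa [inv_mul_eq_div] at h
  -- the tsum equals -(complex log)
  have htsum : ∀ q, (∑' n : ℕ, (F q)^(n+1) / (((n:ℂ)+1) * (k:ℂ)^(n+1))) =
      -(Complex.log (1 - F q / k)) := fun q => (key q).tsum_eq
  -- bound on |A n| for summability claim
  have hAbd : ∀ n : ℕ, ‖A n‖ ≤ M^n := by
    intro n
    have h1 := hAint n
    have h2 : A n = (∫ q, (F q)^n ∂μ) / ((2:ℂ) * Real.pi)^2 := by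
      rw [h1, mul_comm, mul_div_assoc, div_self h2πC, mul_one]
    rw [h2, norm_div]
    have h3 : ‖((2:ℂ) * Real.pi)^2‖ = (2*Real.pi)^2 := by
      rw [norm_pow, norm_mul, Complex.norm_two, Complex.norm_real, Real.norm_eq_abs, abs_of_pos Real.pi_pos]
    rw [h3]
    rw [div_le_iff₀ (by positivity)]
    calc ‖∫ q, (F q)^n ∂μ‖ ≤ ∫ q, ‖(F q)^n‖ ∂μ := norm_integral_le_integral_norm _
      _ ≤ ∫ _q, M^n ∂μ := by
          apply integral_mono _ (integrable_const _)
          · intro q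
            simp only [norm_pow]
            exact pow_le_pow_left₀ (norm_nonneg _) (hFM q) _
          · exact (hint (fun q => (F q)^n) (M^n) (hFc.pow n) (fun q => by
              rw [norm_pow]; exact pow_le_pow_left₀ (norm_nonneg _) (hFM q) _)).norm
      _ = M^n * (2*Real.pi)^2 := by rw [integral_const, smul_eq_mul, hμuniv]; ring
  constructor
  · -- summability
    apply Summable.of_nonneg_of_le (fun n => by positivity)
      (fun n => ?_) (summable_geometric_of_lt_one hr0 hr1 |>.mul_left r |>.congr
        (fun n => by rw [← pow_succ']))
    have hd : (0:ℝ) < ((n:ℝ)+1) * k^(n+1) := by positivity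
    rw [div_le_iff₀ hd]
    calc ‖A (n+1)‖ ≤ M^(n+1) := hAbd (n+1)
      _ = r^(n+1) * k^(n+1) := by
          rw [hr, div_pow, div_mul_cancel₀]
          positivity
      _ ≤ r^(n+1) * (((n:ℝ)+1) * k^(n+1)) := by
          apply mul_le_mul_of_nonneg_left _ (by positivity)
          nlinarith [pow_pos hk0 (n+1), (Nat.cast_nonneg n : (0:ℝ) ≤ n)]
  · -- the main formula
    rw [hm k]
    have hSlogIntRe : Integrable (fun q => (Complex.log (1 - F q / k)).re) μ := by
      simpa using hSlogInt.re
    have hLint : Integrable (fun q => Real.log ‖(k:ℂ) - F q‖) μ := by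
      have : (fun q => Real.log ‖(k:ℂ) - F q‖) =
          fun q => Real.log k + (Complex.log (1 - F q / k)).re := funext hlog
      rw [this]
      exact (integrable_const _).add hSlogIntRe
    have hdi : (∫ θ in (0:ℝ)..(2*Real.pi), ∫ φ in (0:ℝ)..(2*Real.pi),
        Real.log (‖(k:ℂ) -
          p (Complex.exp (Complex.I * (θ:ℂ))) (Complex.exp (Complex.I * (φ:ℂ)))‖)) =
        ∫ q, Real.log ‖(k:ℂ) - F q‖ ∂μ :=
      ml_double (fun q => Real.log ‖(k:ℂ) - F q‖) hLint
    rw [hdi]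
    have hsplit : (∫ q, Real.log ‖(k:ℂ) - F q‖ ∂μ) =
        (2*Real.pi)^2 * Real.log k + (∫ q, (Complex.log (1 - F q / k)).re ∂μ) := by
      rw [funext hlog, integral_add (integrable_const _) hSlogIntRe, integral_const,
        smul_eq_mul, hμuniv]
    have hre : (∫ q, (Complex.log (1 - F q / k)).re ∂μ) =
        (∫ q, Complex.log (1 - F q / k) ∂μ).re := by
      simpa using integral_re hSlogInt
    have hS : (∫ q, (∑' n : ℕ, (F q)^(n+1) / (((n:ℂ)+1) * (k:ℂ)^(n+1))) ∂μ) =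
        -(∫ q, Complex.log (1 - F q / k) ∂μ) := by
      rw [funext htsum, integral_neg]
    rw [hAsum.tsum_eq, hS]
    rw [hsplit, hre]
    have h4 : (-(∫ q, Complex.log (1 - F q / k) ∂μ) / ((2:ℂ) * Real.pi)^2).re =
        -(∫ q, Complex.log (1 - F q / k) ∂μ).re / ((2*Real.pi)^2) := by
      have : ((2:ℂ) * Real.pi)^2 = (((2*Real.pi)^2 : ℝ) : ℂ) := by push_cast; ring
      rw [this, Complex.div_ofReal_re, Complex.neg_re]
    rw [h4]
    have hπ2 : ((2*Real.pi)^2 : ℝ) ≠ 0 := by positivity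
    field_simp
    ring
end

section
/- For every complex number k₂ and every natural number n ≥ 1, the constant Laurent coefficient of (k₂ z + z^{-1} + z w + z² w^{-1})^n, namely (2π)^{-2} ∫₀^{2π} ∫₀^{2π} (k₂ e^{iθ} + e^{-iθ} + e^{i(θ+φ)} + e^{i(2θ−φ)})^n dθ dφ, equals Σ_{i} C(n,i) · C(n−i, (n−i)/2) · C(i, (5i−3n)/4) · k₂^{(5i−3n)/4}, where the sum runs over integers 0 ≤ i ≤ n such that n − i is even, 5i − 3n is nonnegative and divisible by 4, and C denotes the binomial coefficient (with C(a,b) = 0 when b > a). -/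
open Complex intervalIntegral Real Finset

noncomputable def Zex (n i a c : ℕ) : ℤ := (a:ℤ) - ((i-a:ℕ):ℤ) + (c:ℤ) + 2*((n-i-c:ℕ):ℤ)
noncomputable def Wex (n i c : ℕ) : ℤ := (c:ℤ) - ((n-i-c:ℕ):ℤ)

lemma expand_aux (k₂ : ℂ) (n : ℕ) (θ φ : ℝ) :
    (k₂ * Complex.exp (Complex.I * (θ : ℂ)) + Complex.exp (-(Complex.I * (θ : ℂ))) +
        Complex.exp (Complex.I * ((θ : ℂ) + (φ : ℂ))) +
        Complex.exp (Complex.I * (2 * (θ : ℂ) - (φ : ℂ)))) ^ n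
      = ∑ i ∈ range (n+1), ∑ a ∈ range (i+1), ∑ c ∈ range (n-i+1),
          ((n.choose i : ℂ) * (i.choose a) * ((n-i).choose c)) * k₂ ^ a *
            Complex.exp (Complex.I * (Zex n i a c : ℂ) * θ) *
            Complex.exp (Complex.I * (Wex n i c : ℂ) * φ) := by
  have h1 : (k₂ * Complex.exp (Complex.I * (θ : ℂ)) + Complex.exp (-(Complex.I * (θ : ℂ))) +
        Complex.exp (Complex.I * ((θ : ℂ) + (φ : ℂ))) +
        Complex.exp (Complex.I * (2 * (θ : ℂ) - (φ : ℂ))))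
      = (k₂ * Complex.exp (Complex.I * (θ : ℂ)) + Complex.exp (-(Complex.I * (θ : ℂ)))) +
        (Complex.exp (Complex.I * ((θ : ℂ) + (φ : ℂ))) +
         Complex.exp (Complex.I * (2 * (θ : ℂ) - (φ : ℂ)))) := by ring
  rw [h1, add_pow]
  refine Finset.sum_congr rfl (fun i hi => ?_)
  have hin : i ≤ n := Nat.lt_succ_iff.mp (Finset.mem_range.mp hi)
  rw [add_pow, add_pow, Finset.sum_mul_sum, Finset.sum_mul]
  apply Finset.sum_congr rfl
  intro a ha
  rw [Finset.sum_mul]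
  apply Finset.sum_congr rfl
  intro c hc
  have hai : a ≤ i := Nat.lt_succ_iff.mp (Finset.mem_range.mp ha)
  have hcn : c ≤ n - i := Nat.lt_succ_iff.mp (Finset.mem_range.mp hc)
  have hZ : Zex n i a c = (a:ℤ) - ((i:ℤ) - a) + c + 2*(((n:ℤ) - i) - c) := by
    simp only [Zex]; omega
  have hW : Wex n i c = (c:ℤ) - (((n:ℤ) - i) - c) := by
    simp only [Wex]; omega
  have harg : (a:ℂ) * (Complex.I * θ) + ((i - a : ℕ):ℂ) * (-(Complex.I * θ))
      + (c:ℂ) * (Complex.I * (θ + φ)) + ((n - i - c : ℕ) : ℂ) * (Complex.I * (2*θ - φ))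
      = Complex.I * ((Zex n i a c : ℤ) : ℂ) * θ + Complex.I * ((Wex n i c : ℤ) : ℂ) * φ := by
    have h2 : ((i - a : ℕ) : ℂ) = (i : ℂ) - a := by push_cast [Nat.cast_sub hai]; ring
    have h3 : ((n - i - c : ℕ) : ℂ) = ((n:ℂ) - i) - c := by
      rw [Nat.cast_sub hcn, Nat.cast_sub hin]
    rw [h2, h3, hZ, hW]; push_cast; ring
  have key : Complex.exp (Complex.I * θ) ^ a * Complex.exp (-(Complex.I * θ)) ^ (i-a)
      * Complex.exp (Complex.I * (θ + φ)) ^ c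
      * Complex.exp (Complex.I * (2*θ - φ)) ^ (n-i-c)
      = Complex.exp (Complex.I * ((Zex n i a c : ℤ) : ℂ) * θ)
        * Complex.exp (Complex.I * ((Wex n i c : ℤ) : ℂ) * φ) := by
    rw [← Complex.exp_nat_mul, ← Complex.exp_nat_mul, ← Complex.exp_nat_mul,
      ← Complex.exp_nat_mul, ← Complex.exp_add, ← Complex.exp_add, ← Complex.exp_add,
      harg, Complex.exp_add]
  calc (k₂ * Complex.exp (Complex.I * θ)) ^ a * Complex.exp (-(Complex.I * θ)) ^ (i - a)
        * (i.choose a : ℂ) *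
        (Complex.exp (Complex.I * (θ + φ)) ^ c
          * Complex.exp (Complex.I * (2*θ - φ)) ^ (n - i - c) * ((n-i).choose c : ℂ))
        * (n.choose i : ℂ)
      = ((n.choose i : ℂ) * (i.choose a) * ((n-i).choose c)) * k₂ ^ a *
          (Complex.exp (Complex.I * θ) ^ a * Complex.exp (-(Complex.I * θ)) ^ (i-a)
            * Complex.exp (Complex.I * (θ + φ)) ^ c
            * Complex.exp (Complex.I * (2*θ - φ)) ^ (n-i-c)) := by rw [mul_pow]; ring
    _ = _ := by rw [key]; ring

lemma comb_aux (k₂ : ℂ) (n i : ℕ) (hin : i ≤ n) :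
    (∑ a ∈ range (i+1), ∑ c ∈ range (n-i+1),
        ((n.choose i : ℂ) * (i.choose a) * ((n-i).choose c)) * k₂ ^ a *
          (if Zex n i a c = 0 then ((2*Real.pi : ℝ) : ℂ) else 0) *
          (if Wex n i c = 0 then ((2*Real.pi : ℝ) : ℂ) else 0))
      = if (2 ∣ (n - i) ∧ 3 * n ≤ 5 * i ∧ 4 ∣ (5 * i - 3 * n)) then
          ((2*Real.pi : ℝ) : ℂ)^2 * ((n.choose i : ℂ) * ((n-i).choose ((n-i)/2)) *
            (i.choose ((5*i-3*n)/4)) * k₂ ^ ((5*i-3*n)/4)) else 0 := by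
  by_cases hcond : (2 ∣ (n - i) ∧ 3 * n ≤ 5 * i ∧ 4 ∣ (5 * i - 3 * n))
  · rw [if_pos hcond]
    obtain ⟨h2, h3, h4⟩ := hcond
    have ha0 : (5*i-3*n)/4 ∈ range (i+1) := by
      rw [Finset.mem_range]; omega
    rw [Finset.sum_eq_single_of_mem _ ha0]
    · have hc0 : (n-i)/2 ∈ range (n-i+1) := by rw [Finset.mem_range]; omega
      rw [Finset.sum_eq_single_of_mem _ hc0]
      · have hZ : Zex n i ((5*i-3*n)/4) ((n-i)/2) = 0 := by simp only [Zex]; omega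
        have hW : Wex n i ((n-i)/2) = 0 := by simp only [Wex]; omega
        rw [if_pos hZ, if_pos hW]; ring
      · intro c hc hne
        have hW : Wex n i c ≠ 0 := by
          simp only [Wex]
          have := Finset.mem_range.mp hc
          omega
        rw [if_neg hW]; ring
    · intro a ha hne
      refine Finset.sum_eq_zero (fun c hc => ?_)
      have hca : c ≤ n - i := by have := Finset.mem_range.mp hc; omega
      have hai : a ≤ i := by have := Finset.mem_range.mp ha; omega
      by_cases hW : Wex n i c = 0
      · have hZ : Zex n i a c ≠ 0 := by
          simp only [Wex] at hW; simp only [Zex]; omega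
        rw [if_neg hZ]; ring
      · rw [if_neg hW]; ring
  · rw [if_neg hcond]
    refine Finset.sum_eq_zero (fun a ha => Finset.sum_eq_zero (fun c hc => ?_))
    have hca : c ≤ n - i := by have := Finset.mem_range.mp hc; omega
    have hai : a ≤ i := by have := Finset.mem_range.mp ha; omega
    by_cases hW : Wex n i c = 0
    · have hZ : Zex n i a c ≠ 0 := by
        simp only [Wex] at hW; simp only [Zex]
        intro h
        exact hcond (by constructor <;> omega)
      rw [if_neg hZ]; ring
    · rw [if_neg hW]; ring

lemma int_exp_aux' (m : ℤ) :
    ∫ x in (0:ℝ)..(2*Real.pi), Complex.exp (Complex.I * (m:ℂ) * (x:ℂ))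
      = if m = 0 then ((2*Real.pi : ℝ) : ℂ) else 0 := by
  by_cases hm : m = 0
  · simp [hm]
  · rw [if_neg hm]
    have hc : (Complex.I * (m:ℂ)) ≠ 0 := by
      simp [Complex.I_ne_zero, Complex.ext_iff]
      exact_mod_cast hm
    rw [integral_exp_mul_complex hc]
    have : Complex.I * (m:ℂ) * ((2*Real.pi : ℝ):ℂ) = (m:ℂ) * (2 * Real.pi * Complex.I) := by
      push_cast; ring
    rw [this, Complex.exp_int_mul_two_pi_mul_I]
    simp

/-- The constant Laurent coefficient of `(k₂ z + z⁻¹ + z w + z² w⁻¹)ⁿ`, computed as a torus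
average, equals `∑ᵢ C(n,i) C(n−i,(n−i)/2) C(i,(5i−3n)/4) k₂^((5i−3n)/4)`, the sum running
over `0 ≤ i ≤ n` with `n − i` even and `5i − 3n` nonnegative and divisible by `4`. -/
theorem constant_term_C3Z5 (k₂ : ℂ) (n : ℕ) (hn : 1 ≤ n) :
    ((1 : ℂ) / (2 * Real.pi) ^ 2) *
        ∫ θ in (0 : ℝ)..(2 * Real.pi), ∫ φ in (0 : ℝ)..(2 * Real.pi),
          (k₂ * Complex.exp (Complex.I * (θ : ℂ)) + Complex.exp (-(Complex.I * (θ : ℂ))) +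
            Complex.exp (Complex.I * ((θ : ℂ) + (φ : ℂ))) +
            Complex.exp (Complex.I * (2 * (θ : ℂ) - (φ : ℂ)))) ^ n
      = ∑ i ∈ (Finset.range (n + 1)).filter
            (fun i => 2 ∣ (n - i) ∧ 3 * n ≤ 5 * i ∧ 4 ∣ (5 * i - 3 * n)),
          (Nat.choose n i : ℂ) * (Nat.choose (n - i) ((n - i) / 2) : ℂ) *
            (Nat.choose i ((5 * i - 3 * n) / 4) : ℂ) * k₂ ^ ((5 * i - 3 * n) / 4) := by
  have hinner : ∀ θ : ℝ,
      (∫ φ in (0 : ℝ)..(2 * Real.pi),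
          (k₂ * Complex.exp (Complex.I * (θ : ℂ)) + Complex.exp (-(Complex.I * (θ : ℂ))) +
            Complex.exp (Complex.I * ((θ : ℂ) + (φ : ℂ))) +
            Complex.exp (Complex.I * (2 * (θ : ℂ) - (φ : ℂ)))) ^ n)
        = ∑ i ∈ range (n+1), ∑ a ∈ range (i+1), ∑ c ∈ range (n-i+1),
            ((n.choose i : ℂ) * (i.choose a) * ((n-i).choose c)) * k₂ ^ a *
              Complex.exp (Complex.I * (Zex n i a c : ℂ) * θ) *
              (if Wex n i c = 0 then ((2*Real.pi : ℝ) : ℂ) else 0) := by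
    intro θ
    simp only [expand_aux]
    rw [intervalIntegral.integral_finset_sum (fun i _ => by
      apply Continuous.intervalIntegrable; fun_prop)]
    refine Finset.sum_congr rfl fun i hi => ?_
    rw [intervalIntegral.integral_finset_sum (fun a _ => by
      apply Continuous.intervalIntegrable; fun_prop)]
    refine Finset.sum_congr rfl fun a ha => ?_
    rw [intervalIntegral.integral_finset_sum (fun c _ => by
      apply Continuous.intervalIntegrable; fun_prop)]
    refine Finset.sum_congr rfl fun c hc => ?_
    rw [intervalIntegral.integral_const_mul, int_exp_aux']
  rw [intervalIntegral.integral_congr (fun θ _ => hinner θ)]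
  rw [intervalIntegral.integral_finset_sum (fun i _ => by
    apply Continuous.intervalIntegrable; fun_prop)]
  have houter : ∀ i ∈ range (n+1),
      (∫ θ in (0:ℝ)..(2*Real.pi), ∑ a ∈ range (i+1), ∑ c ∈ range (n-i+1),
          ((n.choose i : ℂ) * (i.choose a) * ((n-i).choose c)) * k₂ ^ a *
            Complex.exp (Complex.I * (Zex n i a c : ℂ) * θ) *
            (if Wex n i c = 0 then ((2*Real.pi : ℝ) : ℂ) else 0))
        = ∑ a ∈ range (i+1), ∑ c ∈ range (n-i+1),
            ((n.choose i : ℂ) * (i.choose a) * ((n-i).choose c)) * k₂ ^ a *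
              (if Zex n i a c = 0 then ((2*Real.pi : ℝ) : ℂ) else 0) *
              (if Wex n i c = 0 then ((2*Real.pi : ℝ) : ℂ) else 0) := by
    intro i hi
    rw [intervalIntegral.integral_finset_sum (fun a _ => by
      apply Continuous.intervalIntegrable; fun_prop)]
    refine Finset.sum_congr rfl fun a ha => ?_
    rw [intervalIntegral.integral_finset_sum (fun c _ => by
      apply Continuous.intervalIntegrable; fun_prop)]
    refine Finset.sum_congr rfl fun c hc => ?_
    have : (fun θ : ℝ => ((n.choose i : ℂ) * (i.choose a) * ((n-i).choose c)) * k₂ ^ a *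
            Complex.exp (Complex.I * (Zex n i a c : ℂ) * θ) *
            (if Wex n i c = 0 then ((2*Real.pi : ℝ) : ℂ) else 0))
        = (fun θ : ℝ => (((n.choose i : ℂ) * (i.choose a) * ((n-i).choose c)) * k₂ ^ a *
            (if Wex n i c = 0 then ((2*Real.pi : ℝ) : ℂ) else 0)) *
            Complex.exp (Complex.I * (Zex n i a c : ℂ) * θ)) := by
      funext θ; ring
    rw [this, intervalIntegral.integral_const_mul, int_exp_aux']
    ring
  rw [Finset.sum_congr rfl houter]
  have hcomb : ∀ i ∈ range (n+1),
      (∑ a ∈ range (i+1), ∑ c ∈ range (n-i+1),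
          ((n.choose i : ℂ) * (i.choose a) * ((n-i).choose c)) * k₂ ^ a *
            (if Zex n i a c = 0 then ((2*Real.pi : ℝ) : ℂ) else 0) *
            (if Wex n i c = 0 then ((2*Real.pi : ℝ) : ℂ) else 0))
        = if (2 ∣ (n - i) ∧ 3 * n ≤ 5 * i ∧ 4 ∣ (5 * i - 3 * n)) then
            ((2*Real.pi : ℝ) : ℂ)^2 * ((n.choose i : ℂ) * ((n-i).choose ((n-i)/2)) *
              (i.choose ((5*i-3*n)/4)) * k₂ ^ ((5*i-3*n)/4)) else 0 :=
    fun i hi => comb_aux k₂ n i (Nat.lt_succ_iff.mp (Finset.mem_range.mp hi))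
  rw [Finset.sum_congr rfl hcomb]
  rw [Finset.sum_filter]
  rw [Finset.mul_sum]
  refine Finset.sum_congr rfl fun i hi => ?_
  have hpi : ((2:ℂ) * (Real.pi:ℂ)) ^ 2 ≠ 0 :=
    pow_ne_zero _ (mul_ne_zero two_ne_zero (by exact_mod_cast Real.pi_ne_zero))
  by_cases hc : (2 ∣ (n - i) ∧ 3 * n ≤ 5 * i ∧ 4 ∣ (5 * i - 3 * n))
  · rw [if_pos hc, if_pos hc]
    rw [← mul_assoc]
    have : (1:ℂ) / (2 * Real.pi) ^ 2 * ((2*Real.pi : ℝ) : ℂ)^2 = 1 := by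
      push_cast
      exact one_div_mul_cancel hpi
    rw [this, one_mul]
  · rw [if_neg hc, if_neg hc, mul_zero]
end

section
/- For every natural number m, the constant Laurent coefficient of (u + u^{-1} + v + v^{-1} + w + w^{-1})^m, namely (2π)^{-3} ∫₀^{2π} ∫₀^{2π} ∫₀^{2π} (2cos θ₁ + 2cos θ₂ + 2cos θ₃)^m dθ₁ dθ₂ dθ₃, equals C(2n, n) · Σ_{l=0}^{n} C(2l, l) · C(n, l)² when m = 2n is even, and equals 0 when m is odd, where C denotes the binomial coefficient. -/
open Complex intervalIntegral Real in
lemma expInt (n : ℤ) :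
    (∫ θ in (0:ℝ)..(2*Real.pi), Complex.exp (n * θ * Complex.I)) =
      if n = 0 then (2*Real.pi : ℂ) else 0 := by
  rcases eq_or_ne n 0 with h | h
  · simp [h]
  · rw [if_neg h]
    have hc : (n : ℂ) * Complex.I ≠ 0 := by
      simp [Complex.I_ne_zero, h]
    have := integral_exp_mul_complex (a := 0) (b := 2*Real.pi) hc
    have heq : (∫ θ in (0:ℝ)..(2*Real.pi), Complex.exp (n * θ * Complex.I)) =
        ∫ θ in (0:ℝ)..(2*Real.pi), Complex.exp ((n * Complex.I) * θ) := by
      congr 1; ext θ; ring_nf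
    rw [heq, this]
    have h1 : (n : ℂ) * Complex.I * (2*Real.pi : ℝ) = n * (2 * Real.pi * Complex.I) := by
      push_cast; ring
    rw [h1, Complex.exp_int_mul_two_pi_mul_I]
    simp

noncomputable def cc (k : ℕ) : ℝ := if 2 ∣ k then (k.choose (k/2) : ℝ) else 0

lemma cosInt (k : ℕ) :
    (∫ θ in (0:ℝ)..(2*Real.pi), (2 * Real.cos θ)^k) = cc k * (2*Real.pi) := by
  have key : ((∫ θ in (0:ℝ)..(2*Real.pi), (2 * Real.cos θ)^k : ℝ) : ℂ)
      = ((cc k * (2*Real.pi) : ℝ) : ℂ) := by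
    rw [← intervalIntegral.integral_ofReal]
    have h1 : ∀ θ : ℝ, (((2 * Real.cos θ)^k : ℝ) : ℂ)
        = ∑ j ∈ Finset.range (k+1),
            (k.choose j : ℂ) * Complex.exp ((2*(j:ℤ) - k : ℤ) * θ * Complex.I) := by
      intro θ
      have h2 : (((2 * Real.cos θ)^k : ℝ) : ℂ)
          = (Complex.exp (θ * Complex.I) + Complex.exp (-θ * Complex.I))^k := by
        push_cast
        rw [← Complex.two_cos]
      rw [h2, add_pow]
      refine Finset.sum_congr rfl fun j hj => ?_
      rw [← Complex.exp_nat_mul, ← Complex.exp_nat_mul, ← Complex.exp_add]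
      rw [Finset.mem_range, Nat.lt_succ_iff] at hj
      have : (j:ℂ) * (θ * Complex.I) + ((k:ℕ) - j : ℕ) * (-θ * Complex.I)
          = (2*(j:ℤ) - k : ℤ) * θ * Complex.I := by
        push_cast [Nat.cast_sub hj]
        ring
      rw [this]; ring
    simp_rw [h1]
    rw [intervalIntegral.integral_finset_sum]
    · simp_rw [intervalIntegral.integral_const_mul, expInt]
      by_cases hdk : 2 ∣ k
      · obtain ⟨n, hn⟩ := hdk
        subst hn
        rw [Finset.sum_eq_single n]
        · have h0 : (2*(n:ℤ) - (2*n : ℕ) : ℤ) = 0 := by push_cast; ring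
          rw [h0, if_pos rfl]
          unfold cc
          rw [if_pos ⟨n, rfl⟩]
          have : 2 * n / 2 = n := by omega
          rw [this]
          push_cast; ring
        · intro j hj hne
          have : (2*(j:ℤ) - (2*n : ℕ) : ℤ) ≠ 0 := by push_cast; omega
          rw [if_neg this, mul_zero]
        · intro h
          exfalso; apply h
          rw [Finset.mem_range]; omega
      · unfold cc
        rw [if_neg hdk]
        rw [Finset.sum_eq_zero]
        · simp
        · intro j hj
          have : (2*(j:ℤ) - k : ℤ) ≠ 0 := by
            intro hc
            apply hdk
            have : k = 2 * j := by omega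
            omega
          rw [if_neg this, mul_zero]
    · intro j hj
      apply Continuous.intervalIntegrable
      fun_prop
  exact_mod_cast key

open Nat

lemma central_sq (c : ℕ) : ((2*c).choose c) = ∑ b ∈ Finset.range (c+1), (c.choose b)^2 := by
  have h := Nat.add_choose_eq c c c
  rw [Finset.Nat.sum_antidiagonal_eq_sum_range_succ_mk] at h
  rw [two_mul, h]
  refine Finset.sum_congr rfl fun b hb => ?_
  rw [Finset.mem_range, Nat.lt_succ_iff] at hb
  rw [Nat.choose_symm hb, sq]

lemma term_id (n c b : ℕ) (hb : b ≤ c) (hc : c ≤ n) :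
    ((2*n).choose (2*c) : ℝ) * ((2*c).choose (2*b) : ℝ) * ((2*b).choose b : ℝ)
        * ((2*(c-b)).choose (c-b) : ℝ) * ((2*(n-c)).choose (n-c) : ℝ)
      = ((2*n).choose n : ℝ) * ((n.choose c : ℝ))^2 * ((c.choose b : ℝ))^2 := by
  have hf : ∀ p : ℕ, (p ! : ℝ) ≠ 0 := fun p => Nat.cast_ne_zero.2 (Nat.factorial_ne_zero p)
  have e1 : ((2*n).choose (2*c) : ℝ) = (2*n)! / ((2*c)! * (2*(n-c))!) := by
    rw [Nat.cast_choose ℝ (by omega : 2*c ≤ 2*n)]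
    have h' : 2*n-2*c = 2*(n-c) ∧ 2*c-2*b = 2*(c-b) ∧ 2*b-b = b ∧ 2*(c-b)-(c-b) = c-b ∧ 2*(n-c)-(n-c) = n-c ∧ 2*n-n = n := by omega
    obtain ⟨h1,h2,h3,h4,h5,h6⟩ := h'
    simp only [h1, h2, h3, h4, h5, h6]
  have e2 : ((2*c).choose (2*b) : ℝ) = (2*c)! / ((2*b)! * (2*(c-b))!) := by
    rw [Nat.cast_choose ℝ (by omega : 2*b ≤ 2*c)]
    have h' : 2*n-2*c = 2*(n-c) ∧ 2*c-2*b = 2*(c-b) ∧ 2*b-b = b ∧ 2*(c-b)-(c-b) = c-b ∧ 2*(n-c)-(n-c) = n-c ∧ 2*n-n = n := by omega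
    obtain ⟨h1,h2,h3,h4,h5,h6⟩ := h'
    simp only [h1, h2, h3, h4, h5, h6]
  have e3 : ((2*b).choose b : ℝ) = (2*b)! / (b ! * b !) := by
    rw [Nat.cast_choose ℝ (by omega : b ≤ 2*b)]
    have h' : 2*n-2*c = 2*(n-c) ∧ 2*c-2*b = 2*(c-b) ∧ 2*b-b = b ∧ 2*(c-b)-(c-b) = c-b ∧ 2*(n-c)-(n-c) = n-c ∧ 2*n-n = n := by omega
    obtain ⟨h1,h2,h3,h4,h5,h6⟩ := h'
    simp only [h1, h2, h3, h4, h5, h6]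
  have e4 : ((2*(c-b)).choose (c-b) : ℝ) = (2*(c-b))! / ((c-b)! * (c-b)!) := by
    rw [Nat.cast_choose ℝ (by omega : c-b ≤ 2*(c-b))]
    have h' : 2*n-2*c = 2*(n-c) ∧ 2*c-2*b = 2*(c-b) ∧ 2*b-b = b ∧ 2*(c-b)-(c-b) = c-b ∧ 2*(n-c)-(n-c) = n-c ∧ 2*n-n = n := by omega
    obtain ⟨h1,h2,h3,h4,h5,h6⟩ := h'
    simp only [h1, h2, h3, h4, h5, h6]
  have e5 : ((2*(n-c)).choose (n-c) : ℝ) = (2*(n-c))! / ((n-c)! * (n-c)!) := by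
    rw [Nat.cast_choose ℝ (by omega : n-c ≤ 2*(n-c))]
    have h' : 2*n-2*c = 2*(n-c) ∧ 2*c-2*b = 2*(c-b) ∧ 2*b-b = b ∧ 2*(c-b)-(c-b) = c-b ∧ 2*(n-c)-(n-c) = n-c ∧ 2*n-n = n := by omega
    obtain ⟨h1,h2,h3,h4,h5,h6⟩ := h'
    simp only [h1, h2, h3, h4, h5, h6]
  have e6 : ((2*n).choose n : ℝ) = (2*n)! / (n ! * n !) := by
    rw [Nat.cast_choose ℝ (by omega : n ≤ 2*n)]
    have h' : 2*n-2*c = 2*(n-c) ∧ 2*c-2*b = 2*(c-b) ∧ 2*b-b = b ∧ 2*(c-b)-(c-b) = c-b ∧ 2*(n-c)-(n-c) = n-c ∧ 2*n-n = n := by omega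
    obtain ⟨h1,h2,h3,h4,h5,h6⟩ := h'
    simp only [h1, h2, h3, h4, h5, h6]
  have e7 : ((n.choose c : ℝ)) = n ! / (c ! * (n-c)!) := Nat.cast_choose ℝ hc
  have e8 : ((c.choose b : ℝ)) = c ! / (b ! * (c-b)!) := Nat.cast_choose ℝ hb
  rw [e1, e2, e3, e4, e5, e6, e7, e8]
  field_simp

lemma cc_two_mul (b : ℕ) : cc (2*b) = ((2*b).choose b : ℝ) := by
  unfold cc
  rw [if_pos ⟨b, rfl⟩, show 2*b/2 = b by omega]

lemma cc_odd {k : ℕ} (h : ¬ 2 ∣ k) : cc k = 0 := by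
  unfold cc
  rw [if_neg h]

lemma sum_even_vanish (n : ℕ) (g : ℕ → ℝ) (h : ∀ k, ¬ 2 ∣ k → g k = 0) :
    ∑ k ∈ Finset.range (2*n+1), g k = ∑ c ∈ Finset.range (n+1), g (2*c) := by
  induction n with
  | zero => simp
  | succ n ih =>
      rw [show 2*(n+1)+1 = (2*n+1) + 1 + 1 by ring, Finset.sum_range_succ,
        Finset.sum_range_succ, ih, Finset.sum_range_succ, h (2*n+1) (by omega), add_zero,
        show 2*n+1+1 = 2*(n+1) by ring]
      conv_rhs => rw [Finset.sum_range_succ]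
      rw [← Finset.sum_range_succ]

noncomputable def A (m : ℕ) : ℝ :=
  ∑ k ∈ Finset.range (m+1), ∑ j ∈ Finset.range (k+1),
    (m.choose k : ℝ) * (k.choose j : ℝ) * cc j * cc (k-j) * cc (m-k)

lemma A_odd {m : ℕ} (h : ¬ 2 ∣ m) : A m = 0 := by
  unfold A
  refine Finset.sum_eq_zero fun k hk => Finset.sum_eq_zero fun j hj => ?_
  rw [Finset.mem_range, Nat.lt_succ_iff] at hk hj
  by_cases h1 : 2 ∣ j
  · by_cases h2 : 2 ∣ (k - j)
    · have h3 : ¬ 2 ∣ (m - k) := by omega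
      rw [cc_odd h3, mul_zero]
    · rw [cc_odd h2, mul_zero, zero_mul]
  · rw [cc_odd h1, mul_zero, zero_mul, zero_mul]

lemma A_even (n : ℕ) : A (2*n)
    = ((2*n).choose n : ℝ) * ∑ l ∈ Finset.range (n+1),
        ((2*l).choose l : ℝ) * ((n.choose l : ℝ))^2 := by
  unfold A
  rw [sum_even_vanish n _ (fun k hk => Finset.sum_eq_zero fun j hj => by
    rw [Finset.mem_range, Nat.lt_succ_iff] at hj
    by_cases h1 : 2 ∣ j
    · have h2 : ¬ 2 ∣ (k - j) := by omega
      rw [cc_odd h2, mul_zero, zero_mul]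
    · rw [cc_odd h1, mul_zero, zero_mul, zero_mul])]
  rw [Finset.mul_sum]
  refine Finset.sum_congr rfl fun c hc => ?_
  rw [Finset.mem_range, Nat.lt_succ_iff] at hc
  rw [sum_even_vanish c _ (fun j hj => by rw [cc_odd hj, mul_zero, zero_mul, zero_mul])]
  have key : ∀ b ∈ Finset.range (c+1),
      ((2*n).choose (2*c) : ℝ) * ((2*c).choose (2*b) : ℝ) * cc (2*b) * cc (2*c - 2*b)
          * cc (2*n - 2*c)
        = (((2*n).choose n : ℝ) * ((n.choose c : ℝ))^2) * ((c.choose b : ℝ))^2 := by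
    intro b hb
    rw [Finset.mem_range, Nat.lt_succ_iff] at hb
    rw [show 2*c - 2*b = 2*(c-b) by omega, show 2*n - 2*c = 2*(n-c) by omega,
      cc_two_mul, cc_two_mul, cc_two_mul]
    rw [mul_assoc, ← term_id n c b hb hc]
    ring
  rw [Finset.sum_congr rfl key, ← Finset.mul_sum]
  have hcs : ∑ b ∈ Finset.range (c+1), ((c.choose b : ℝ))^2 = ((2*c).choose c : ℝ) := by
    rw [central_sq]
    push_cast
    ring
  rw [hcs]
  ring

lemma oneVar (x : ℝ) (p : ℕ) :
    (∫ θ in (0:ℝ)..(2*Real.pi), (x + 2*Real.cos θ)^p)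
      = ∑ k ∈ Finset.range (p+1), x^k * (p.choose k : ℝ) * (cc (p-k) * (2*Real.pi)) := by
  have h : ∀ θ : ℝ, (x + 2*Real.cos θ)^p
      = ∑ k ∈ Finset.range (p+1), (x^k * (p.choose k : ℝ)) * (2*Real.cos θ)^(p-k) := by
    intro θ
    rw [add_pow]
    exact Finset.sum_congr rfl fun k _ => by ring
  simp_rw [h]
  rw [intervalIntegral.integral_finset_sum (fun k _ => by
    apply Continuous.intervalIntegrable
    fun_prop)]
  simp_rw [intervalIntegral.integral_const_mul, cosInt]

lemma triple (m : ℕ) :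
    (∫ θ₁ in (0:ℝ)..(2*Real.pi), ∫ θ₂ in (0:ℝ)..(2*Real.pi), ∫ θ₃ in (0:ℝ)..(2*Real.pi),
        (2*Real.cos θ₁ + 2*Real.cos θ₂ + 2*Real.cos θ₃)^m)
      = A m * (2*Real.pi)^3 := by
  have h3 : ∀ θ₁ θ₂ : ℝ,
      (∫ θ₃ in (0:ℝ)..(2*Real.pi), (2*Real.cos θ₁ + 2*Real.cos θ₂ + 2*Real.cos θ₃)^m)
        = ∑ k ∈ Finset.range (m+1), (2*Real.cos θ₁ + 2*Real.cos θ₂)^k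
            * ((m.choose k : ℝ) * (cc (m-k) * (2*Real.pi))) := by
    intro θ₁ θ₂
    rw [oneVar (2*Real.cos θ₁ + 2*Real.cos θ₂) m]
    exact Finset.sum_congr rfl fun k _ => by ring
  simp_rw [h3]
  have h2 : ∀ θ₁ : ℝ,
      (∫ θ₂ in (0:ℝ)..(2*Real.pi), ∑ k ∈ Finset.range (m+1),
          (2*Real.cos θ₁ + 2*Real.cos θ₂)^k * ((m.choose k : ℝ) * (cc (m-k) * (2*Real.pi))))
        = ∑ k ∈ Finset.range (m+1), ∑ j ∈ Finset.range (k+1),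
            (2*Real.cos θ₁)^j *
              ((k.choose j : ℝ) * (cc (k-j) * (2*Real.pi))
                * ((m.choose k : ℝ) * (cc (m-k) * (2*Real.pi)))) := by
    intro θ₁
    rw [intervalIntegral.integral_finset_sum (fun k _ => by
      apply Continuous.intervalIntegrable
      fun_prop)]
    refine Finset.sum_congr rfl fun k _ => ?_
    rw [intervalIntegral.integral_mul_const, oneVar (2*Real.cos θ₁) k, Finset.sum_mul]
    exact Finset.sum_congr rfl fun j _ => by ring
  simp_rw [h2]
  rw [intervalIntegral.integral_finset_sum (fun k _ => by
    apply Continuous.intervalIntegrable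
    fun_prop)]
  have h1 : ∀ k ∈ Finset.range (m+1),
      (∫ θ₁ in (0:ℝ)..(2*Real.pi), ∑ j ∈ Finset.range (k+1),
          (2*Real.cos θ₁)^j *
            ((k.choose j : ℝ) * (cc (k-j) * (2*Real.pi))
              * ((m.choose k : ℝ) * (cc (m-k) * (2*Real.pi)))))
        = ∑ j ∈ Finset.range (k+1),
            (cc j * (2*Real.pi)) *
              ((k.choose j : ℝ) * (cc (k-j) * (2*Real.pi))
                * ((m.choose k : ℝ) * (cc (m-k) * (2*Real.pi)))) := by
    intro k _
    rw [intervalIntegral.integral_finset_sum (fun j _ => by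
      apply Continuous.intervalIntegrable
      fun_prop)]
    refine Finset.sum_congr rfl fun j _ => ?_
    rw [intervalIntegral.integral_mul_const, cosInt]
  rw [Finset.sum_congr rfl h1]
  unfold A
  rw [Finset.sum_mul]
  refine Finset.sum_congr rfl fun k _ => ?_
  rw [Finset.sum_mul]
  refine Finset.sum_congr rfl fun j _ => by ring

/-- The constant Laurent coefficient of `(u + u⁻¹ + v + v⁻¹ + w + w⁻¹)^m`, i.e. the triple
torus average of `(2 cos θ₁ + 2 cos θ₂ + 2 cos θ₃)^m`, equals
`C(2n,n) ∑_{l=0}^{n} C(2l,l) C(n,l)²` when `m = 2n` is even, and `0` when `m` is odd. -/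
theorem constant_term_P1P1P1 (m : ℕ) :
    (∀ n : ℕ, m = 2 * n →
      (1 / (2 * Real.pi) ^ 3) *
          (∫ θ₁ in (0 : ℝ)..(2 * Real.pi), ∫ θ₂ in (0 : ℝ)..(2 * Real.pi),
            ∫ θ₃ in (0 : ℝ)..(2 * Real.pi),
              (2 * Real.cos θ₁ + 2 * Real.cos θ₂ + 2 * Real.cos θ₃) ^ m)
        = (Nat.choose (2 * n) n : ℝ) *
            ∑ l ∈ Finset.range (n + 1),
              (Nat.choose (2 * l) l : ℝ) * (Nat.choose n l : ℝ) ^ 2) ∧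
    (¬ 2 ∣ m →
      (1 / (2 * Real.pi) ^ 3) *
          (∫ θ₁ in (0 : ℝ)..(2 * Real.pi), ∫ θ₂ in (0 : ℝ)..(2 * Real.pi),
            ∫ θ₃ in (0 : ℝ)..(2 * Real.pi),
              (2 * Real.cos θ₁ + 2 * Real.cos θ₂ + 2 * Real.cos θ₃) ^ m)
        = 0) := by
  have hpi : (2*Real.pi)^3 ≠ 0 := by positivity
  constructor
  · intro n hn
    subst hn
    rw [triple, A_even]
    field_simp
  · intro h
    rw [triple, A_odd h]
    ring
end

section
/- For every natural number n ≥ 1, the constant Laurent coefficient of (z₁ + z₂ + z₃ + z₁^{-1} + z₂^{-1}z₃^{-1})^n, namely (2π)^{-3} ∫₀^{2π} ∫₀^{2π} ∫₀^{2π} (e^{iθ₁} + e^{iθ₂} + e^{iθ₃} + e^{-iθ₁} + e^{-i(θ₂+θ₃)})^n dθ₁ dθ₂ dθ₃, equals Σ_{i} C(n,i) · C(i, 2n−3i) · C(n−i, 2n−3i) · C(4i−2n, 2i−n), where the sum runs over integers i with n/2 ≤ i ≤ n for which all binomial arguments are nonnegative (equivalently 2i ≥ n and 3i ≤ 2n,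 with C(a,b) = 0 when b > a), and C denotes the binomial coefficient. -/
open Complex intervalIntegral
open scoped Nat

lemma aux_integral_exp (m : ℤ) :
    (∫ θ in (0:ℝ)..(2*Real.pi), Complex.exp ((m:ℂ) * Complex.I * θ)) =
      if m = 0 then (((2*Real.pi : ℝ)) : ℂ) else 0 := by
  rcases eq_or_ne m 0 with h | h
  · simp [h]
  · have hc : (m:ℂ) * Complex.I ≠ 0 := mul_ne_zero (Int.cast_ne_zero.mpr h) Complex.I_ne_zero
    rw [integral_exp_mul_complex hc]
    have h2 : (m:ℂ) * Complex.I * ((2*Real.pi:ℝ):ℂ) = (m:ℂ) * (2*(Real.pi:ℂ) * Complex.I) := by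
      push_cast; ring
    rw [h2, Complex.exp_int_mul_two_pi_mul_I]
    simp [h]

lemma aux_step {ι : Type*} (s : Finset ι) (G : ι → ℂ) (c : ι → ℤ) :
    (∫ θ in (0:ℝ)..(2*Real.pi), ∑ k ∈ s, G k * Complex.exp ((c k : ℂ) * Complex.I * θ))
      = ∑ k ∈ s, G k * (if c k = 0 then (((2*Real.pi:ℝ)):ℂ) else 0) := by
  rw [intervalIntegral.integral_finset_sum]
  · exact Finset.sum_congr rfl fun k _ => by
      rw [intervalIntegral.integral_const_mul, aux_integral_exp]
  · intro k _
    apply Continuous.intervalIntegrable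
    fun_prop

lemma aux_multinomial (a b : ℕ) :
    Nat.multinomial Finset.univ ![a,b,b,a,b] =
      (2*a+3*b).choose (a+2*b) * ((a+2*b).choose a) * ((a+b).choose a) * ((2*b).choose b) := by
  have hP : 0 < a ! * a ! * b ! * b ! * b ! := by positivity
  have hspec := Nat.multinomial_spec (Finset.univ : Finset (Fin 5)) ![a,b,b,a,b]
  rw [Fin.prod_univ_five, Fin.sum_univ_five] at hspec
  simp only [Matrix.cons_val_zero, Matrix.cons_val_one, Matrix.head_cons, Matrix.cons_val_two,
    Matrix.tail_cons, Matrix.cons_val_three, Matrix.cons_val_four] at hspec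
  have h1 : (2*a+3*b).choose (a+2*b) * (a+2*b)! * (a+b)! = (2*a+3*b)! := by
    have := Nat.choose_mul_factorial_mul_factorial (show a+2*b ≤ 2*a+3*b by omega)
    rwa [show 2*a+3*b - (a+2*b) = a+b by omega] at this
  have h2 : (a+2*b).choose a * a ! * (2*b)! = (a+2*b)! := by
    have := Nat.choose_mul_factorial_mul_factorial (show a ≤ a+2*b by omega)
    rwa [show a+2*b - a = 2*b by omega] at this
  have h3 : (a+b).choose a * a ! * b ! = (a+b)! := by
    have := Nat.choose_mul_factorial_mul_factorial (show a ≤ a+b by omega)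
    rwa [show a+b - a = b by omega] at this
  have h4 : (2*b).choose b * b ! * b ! = (2*b)! := by
    have := Nat.choose_mul_factorial_mul_factorial (show b ≤ 2*b by omega)
    rwa [show 2*b - b = b by omega] at this
  refine Nat.eq_of_mul_eq_mul_left hP ?_
  calc a ! * a ! * b ! * b ! * b ! * Nat.multinomial Finset.univ ![a,b,b,a,b]
      = a ! * b ! * b ! * a ! * b ! * Nat.multinomial Finset.univ ![a,b,b,a,b] := by ring
    _ = (a + b + b + a + b)! := hspec
    _ = (2*a+3*b)! := by rw [show a+b+b+a+b = 2*a+3*b by ring]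
    _ = a ! * a ! * b ! * b ! * b ! *
        ((2*a+3*b).choose (a+2*b) * ((a+2*b).choose a) * ((a+b).choose a) * ((2*b).choose b)) := by
        rw [← h1, ← h2, ← h3, ← h4]; ring

/-- The constant Laurent coefficient of `(z₁ + z₂ + z₃ + z₁⁻¹ + z₂⁻¹z₃⁻¹)ⁿ`, computed as a
triple torus average, equals `∑ᵢ C(n,i) C(i,2n−3i) C(n−i,2n−3i) C(4i−2n,2i−n)`, the sum
running over `i` with `2i ≥ n` and `3i ≤ 2n` (so `n/2 ≤ i ≤ n` and all binomial arguments
are nonnegative; `C(a,b) = 0` when `b > a`). -/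
theorem constant_term_P2P1 (n : ℕ) (hn : 1 ≤ n) :
    ((1 : ℂ) / (2 * Real.pi) ^ 3) *
        (∫ θ₁ in (0 : ℝ)..(2 * Real.pi), ∫ θ₂ in (0 : ℝ)..(2 * Real.pi),
          ∫ θ₃ in (0 : ℝ)..(2 * Real.pi),
            (Complex.exp (Complex.I * (θ₁ : ℂ)) + Complex.exp (Complex.I * (θ₂ : ℂ)) +
              Complex.exp (Complex.I * (θ₃ : ℂ)) + Complex.exp (-(Complex.I * (θ₁ : ℂ))) +
              Complex.exp (-(Complex.I * ((θ₂ : ℂ) + (θ₃ : ℂ))))) ^ n)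
      = ∑ i ∈ (Finset.range (n + 1)).filter (fun i => n ≤ 2 * i ∧ 3 * i ≤ 2 * n),
          (Nat.choose n i : ℂ) * (Nat.choose i (2 * n - 3 * i) : ℂ) *
            (Nat.choose (n - i) (2 * n - 3 * i) : ℂ) *
            (Nat.choose (4 * i - 2 * n) (2 * i - n) : ℂ) := by
  set S := Finset.piAntidiag (Finset.univ : Finset (Fin 5)) n with hS
  have expand : ∀ θ₁ θ₂ θ₃ : ℝ,
      (Complex.exp (Complex.I * (θ₁ : ℂ)) + Complex.exp (Complex.I * (θ₂ : ℂ)) +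
        Complex.exp (Complex.I * (θ₃ : ℂ)) + Complex.exp (-(Complex.I * (θ₁ : ℂ))) +
        Complex.exp (-(Complex.I * ((θ₂ : ℂ) + (θ₃ : ℂ))))) ^ n
      = ∑ k ∈ S,
          (Nat.multinomial Finset.univ k : ℂ) *
            Complex.exp ((((k 0 : ℤ) - (k 3 : ℤ) : ℤ) : ℂ) * Complex.I * (θ₁ : ℂ)) *
            Complex.exp ((((k 1 : ℤ) - (k 4 : ℤ) : ℤ) : ℂ) * Complex.I * (θ₂ : ℂ)) *
            Complex.exp ((((k 2 : ℤ) - (k 4 : ℤ) : ℤ) : ℂ) * Complex.I * (θ₃ : ℂ)) := by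
    intro θ₁ θ₂ θ₃
    have h0 : (Complex.exp (Complex.I * (θ₁ : ℂ)) + Complex.exp (Complex.I * (θ₂ : ℂ)) +
        Complex.exp (Complex.I * (θ₃ : ℂ)) + Complex.exp (-(Complex.I * (θ₁ : ℂ))) +
        Complex.exp (-(Complex.I * ((θ₂ : ℂ) + (θ₃ : ℂ)))))
        = ∑ j : Fin 5, Complex.exp (![Complex.I * (θ₁ : ℂ), Complex.I * (θ₂ : ℂ),
            Complex.I * (θ₃ : ℂ), -(Complex.I * (θ₁ : ℂ)),
            -(Complex.I * ((θ₂ : ℂ) + (θ₃ : ℂ)))] j) := by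
      rw [Fin.sum_univ_five]; norm_num; rfl
    rw [h0, Finset.sum_pow_eq_sum_piAntidiag]
    refine Finset.sum_congr rfl fun k _ => ?_
    rw [Fin.prod_univ_five]
    simp only [Matrix.cons_val_zero, Matrix.cons_val_one, Matrix.head_cons, Matrix.cons_val_two,
      Matrix.tail_cons, Matrix.cons_val_three, Matrix.cons_val_four]
    rw [← Complex.exp_nat_mul, ← Complex.exp_nat_mul, ← Complex.exp_nat_mul,
      ← Complex.exp_nat_mul, ← Complex.exp_nat_mul, ← Complex.exp_add, ← Complex.exp_add,
      ← Complex.exp_add, ← Complex.exp_add, mul_assoc, mul_assoc, ← Complex.exp_add,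
      ← Complex.exp_add]
    congr 2
    push_cast
    ring
  simp only [expand]
  -- integrate over θ₃
  have step3 : ∀ θ₁ θ₂ : ℝ,
      (∫ θ₃ in (0:ℝ)..(2*Real.pi), ∑ k ∈ S,
          (Nat.multinomial Finset.univ k : ℂ) *
            Complex.exp ((((k 0 : ℤ) - (k 3 : ℤ) : ℤ) : ℂ) * Complex.I * (θ₁ : ℂ)) *
            Complex.exp ((((k 1 : ℤ) - (k 4 : ℤ) : ℤ) : ℂ) * Complex.I * (θ₂ : ℂ)) *
            Complex.exp ((((k 2 : ℤ) - (k 4 : ℤ) : ℤ) : ℂ) * Complex.I * (θ₃ : ℂ)))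
      = ∑ k ∈ S,
          (Nat.multinomial Finset.univ k : ℂ) *
            Complex.exp ((((k 0 : ℤ) - (k 3 : ℤ) : ℤ) : ℂ) * Complex.I * (θ₁ : ℂ)) *
            (if ((k 2 : ℤ) - (k 4 : ℤ) : ℤ) = 0 then (((2*Real.pi:ℝ)):ℂ) else 0) *
            Complex.exp ((((k 1 : ℤ) - (k 4 : ℤ) : ℤ) : ℂ) * Complex.I * (θ₂ : ℂ)) := by
    intro θ₁ θ₂
    rw [aux_step S (fun k => (Nat.multinomial Finset.univ k : ℂ) *
        Complex.exp ((((k 0 : ℤ) - (k 3 : ℤ) : ℤ) : ℂ) * Complex.I * (θ₁ : ℂ)) *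
        Complex.exp ((((k 1 : ℤ) - (k 4 : ℤ) : ℤ) : ℂ) * Complex.I * (θ₂ : ℂ)))
        (fun k => ((k 2 : ℤ) - (k 4 : ℤ) : ℤ))]
    exact Finset.sum_congr rfl fun k _ => by ring
  simp only [step3]
  -- integrate over θ₂
  have step2 : ∀ θ₁ : ℝ,
      (∫ θ₂ in (0:ℝ)..(2*Real.pi), ∑ k ∈ S,
          (Nat.multinomial Finset.univ k : ℂ) *
            Complex.exp ((((k 0 : ℤ) - (k 3 : ℤ) : ℤ) : ℂ) * Complex.I * (θ₁ : ℂ)) *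
            (if ((k 2 : ℤ) - (k 4 : ℤ) : ℤ) = 0 then (((2*Real.pi:ℝ)):ℂ) else 0) *
            Complex.exp ((((k 1 : ℤ) - (k 4 : ℤ) : ℤ) : ℂ) * Complex.I * (θ₂ : ℂ)))
      = ∑ k ∈ S,
          (Nat.multinomial Finset.univ k : ℂ) *
            (if ((k 2 : ℤ) - (k 4 : ℤ) : ℤ) = 0 then (((2*Real.pi:ℝ)):ℂ) else 0) *
            (if ((k 1 : ℤ) - (k 4 : ℤ) : ℤ) = 0 then (((2*Real.pi:ℝ)):ℂ) else 0) *
            Complex.exp ((((k 0 : ℤ) - (k 3 : ℤ) : ℤ) : ℂ) * Complex.I * (θ₁ : ℂ)) := by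
    intro θ₁
    rw [aux_step S (fun k => (Nat.multinomial Finset.univ k : ℂ) *
        Complex.exp ((((k 0 : ℤ) - (k 3 : ℤ) : ℤ) : ℂ) * Complex.I * (θ₁ : ℂ)) *
        (if ((k 2 : ℤ) - (k 4 : ℤ) : ℤ) = 0 then (((2*Real.pi:ℝ)):ℂ) else 0))
        (fun k => ((k 1 : ℤ) - (k 4 : ℤ) : ℤ))]
    exact Finset.sum_congr rfl fun k _ => by ring
  simp only [step2]
  -- integrate over θ₁
  rw [aux_step S (fun k => (Nat.multinomial Finset.univ k : ℂ) *
      (if ((k 2 : ℤ) - (k 4 : ℤ) : ℤ) = 0 then (((2*Real.pi:ℝ)):ℂ) else 0) *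
      (if ((k 1 : ℤ) - (k 4 : ℤ) : ℤ) = 0 then (((2*Real.pi:ℝ)):ℂ) else 0))
      (fun k => ((k 0 : ℤ) - (k 3 : ℤ) : ℤ))]
  -- collapse the ifs
  have hπ : (((2*Real.pi:ℝ)):ℂ) ≠ 0 := by
    simp [Real.pi_ne_zero]
  have collapse : ∑ k ∈ S,
      (Nat.multinomial Finset.univ k : ℂ) *
        (if ((k 2 : ℤ) - (k 4 : ℤ) : ℤ) = 0 then (((2*Real.pi:ℝ)):ℂ) else 0) *
        (if ((k 1 : ℤ) - (k 4 : ℤ) : ℤ) = 0 then (((2*Real.pi:ℝ)):ℂ) else 0) *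
        (if ((k 0 : ℤ) - (k 3 : ℤ) : ℤ) = 0 then (((2*Real.pi:ℝ)):ℂ) else 0)
      = (((2*Real.pi:ℝ)):ℂ)^3 *
          ∑ k ∈ S.filter (fun k => ((k 0 : ℤ) - (k 3 : ℤ) : ℤ) = 0 ∧
              ((k 1 : ℤ) - (k 4 : ℤ) : ℤ) = 0 ∧ ((k 2 : ℤ) - (k 4 : ℤ) : ℤ) = 0),
            (Nat.multinomial Finset.univ k : ℂ) := by
    rw [Finset.mul_sum, Finset.sum_filter]
    refine Finset.sum_congr rfl fun k _ => ?_
    by_cases h1 : ((k 0 : ℤ) - (k 3 : ℤ) : ℤ) = 0 <;>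
      by_cases h2 : ((k 1 : ℤ) - (k 4 : ℤ) : ℤ) = 0 <;>
      by_cases h3 : ((k 2 : ℤ) - (k 4 : ℤ) : ℤ) = 0 <;>
      simp [h1, h2, h3] <;> try ring
  rw [collapse]
  have hcast : (((2*Real.pi:ℝ)):ℂ) = 2*(Real.pi:ℂ) := by push_cast; ring
  have h2π : (2*(Real.pi:ℂ)) ≠ 0 := by
    simp [Real.pi_ne_zero, Complex.ofReal_ne_zero]
  rw [hcast, ← mul_assoc, one_div, inv_mul_cancel₀ (pow_ne_zero 3 h2π), one_mul]
  -- reindex the sum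
  have hmem : ∀ k : Fin 5 → ℕ,
      (k ∈ S.filter (fun k => ((k 0 : ℤ) - (k 3 : ℤ) : ℤ) = 0 ∧
          ((k 1 : ℤ) - (k 4 : ℤ) : ℤ) = 0 ∧ ((k 2 : ℤ) - (k 4 : ℤ) : ℤ) = 0)) ↔
        (k 0 + k 1 + k 2 + k 3 + k 4 = n ∧ k 3 = k 0 ∧ k 4 = k 1 ∧ k 2 = k 4) := by
    intro k
    simp only [hS, Finset.mem_filter, Finset.mem_piAntidiag, Finset.mem_univ, implies_true,
      and_true, Fin.sum_univ_five]
    omega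
  refine Finset.sum_nbij' (i := fun k => k 0 + 2 * k 1)
    (j := fun i => ![2*n-3*i, 2*i-n, 2*i-n, 2*n-3*i, 2*i-n]) ?_ ?_ ?_ ?_ ?_
  · intro k hk
    rw [hmem] at hk
    simp only [Finset.mem_filter, Finset.mem_range]
    omega
  · intro i hi
    simp only [Finset.mem_filter, Finset.mem_range] at hi
    rw [hmem]
    beta_reduce
    simp only [Matrix.cons_val_zero, Matrix.cons_val_one, Matrix.head_cons, Matrix.cons_val_two,
      Matrix.tail_cons, Matrix.cons_val_three, Matrix.cons_val_four]
    exact ⟨by omega, trivial, trivial, trivial⟩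
  · intro k hk
    rw [hmem] at hk
    funext j
    beta_reduce
    fin_cases j <;> simp <;> omega
  · intro i hi
    simp only [Finset.mem_filter, Finset.mem_range] at hi
    beta_reduce
    simp only [Matrix.cons_val_zero, Matrix.cons_val_one, Matrix.head_cons]
    omega
  · intro k hk
    rw [hmem] at hk
    have hmul : Nat.multinomial Finset.univ k
        = Nat.multinomial Finset.univ ![k 0, k 1, k 1, k 0, k 1] :=
      Nat.multinomial_congr fun j _ => by
        fin_cases j <;> simp <;> omega
    rw [hmul, aux_multinomial]
    push_cast
    rw [show 2*n - 3*(k 0 + 2*k 1) = k 0 by omega,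
      show n - (k 0 + 2*k 1) = k 0 + k 1 by omega,
      show 4*(k 0 + 2*k 1) - 2*n = 2*k 1 by omega,
      show 2*(k 0 + 2*k 1) - n = k 1 by omega,
      show n = 2*k 0 + 3*k 1 by omega]
end

section
/- For every natural number n ≥ 1, the constant Laurent coefficient of (z + w + w^{-1} + z^{-1}w^{-1})^n, namely (2π)^{-2} ∫₀^{2π} ∫₀^{2π} (e^{iθ} + e^{iφ} + e^{-iφ} + e^{-i(θ+φ)})^n dθ dφ, equals Σ_{i} C(n,i) · C(i, i/2) · C(n−i, (2n−i)/4), where the sum runs over integers 0 ≤ i ≤ n such that i is even and 2n − i is divisible by 4, with the convention C(a,b) = 0 when b > a, and C denotes the binomial coefficient. -/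
open Complex Finset intervalIntegral Real


lemma int_exp (m : ℤ) :
    ∫ x in (0:ℝ)..(2*Real.pi), Complex.exp ((m:ℂ) * Complex.I * x)
      = if m = 0 then ((2*Real.pi : ℝ) : ℂ) else 0 := by
  split_ifs with h
  · simp [h]
  · rw [integral_exp_mul_complex (by simp [Complex.ext_iff, h] : (m:ℂ) * Complex.I ≠ 0)]
    have : (m:ℂ) * Complex.I * ((2*Real.pi : ℝ):ℂ) = (m:ℂ) * (2 * Real.pi * Complex.I) := by
      push_cast; ring
    rw [this, Complex.exp_int_mul_two_pi_mul_I]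
    simp

lemma expand (n : ℕ) (θ φ : ℝ) :
    (Complex.exp (Complex.I * (θ : ℂ)) + Complex.exp (Complex.I * (φ : ℂ)) +
        Complex.exp (-(Complex.I * (φ : ℂ))) +
        Complex.exp (-(Complex.I * ((θ : ℂ) + (φ : ℂ))))) ^ n
      = ∑ i ∈ range (n+1), ∑ a ∈ range (i+1), ∑ b ∈ range (n-i+1),
          ((n.choose i : ℂ) * (i.choose a) * ((n-i).choose b)) *
            (Complex.exp (((2*a - i : ℤ) : ℂ) * Complex.I * θ) *
             Complex.exp ((((a:ℤ) + 2*b - n : ℤ) : ℂ) * Complex.I * φ)) := by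
  have h1 : (Complex.exp (Complex.I * (θ : ℂ)) + Complex.exp (Complex.I * (φ : ℂ)) +
        Complex.exp (-(Complex.I * (φ : ℂ))) + Complex.exp (-(Complex.I * ((θ : ℂ) + (φ : ℂ)))))
      = (Complex.exp (Complex.I * (θ : ℂ)) + Complex.exp (-(Complex.I * ((θ : ℂ) + (φ : ℂ)))))
        + (Complex.exp (Complex.I * (φ : ℂ)) + Complex.exp (-(Complex.I * (φ : ℂ)))) := by ring
  rw [h1, add_pow]
  refine Finset.sum_congr rfl fun i hi => ?_
  rw [mem_range, Nat.lt_succ_iff] at hi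
  rw [add_pow, add_pow, Finset.sum_mul_sum, Finset.sum_mul]
  refine Finset.sum_congr rfl fun a ha => ?_
  rw [Finset.sum_mul]
  refine Finset.sum_congr rfl fun b hb => ?_
  rw [mem_range, Nat.lt_succ_iff] at ha hb
  rw [← Complex.exp_nat_mul, ← Complex.exp_nat_mul, ← Complex.exp_nat_mul,
    ← Complex.exp_nat_mul, ← Complex.exp_add, ← Complex.exp_add]
  have h2 : ((i - a : ℕ) : ℂ) = (i : ℂ) - a := by push_cast [ha]; ring
  have h3 : ((n - i - b : ℕ) : ℂ) = (n : ℂ) - i - b := by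
    rw [show n - i - b = n - (i + b) from by omega, Nat.cast_sub (by omega)]
    push_cast; ring
  have harg : (↑a * (Complex.I * ↑θ) + ↑(i - a) * -(Complex.I * (↑θ + ↑φ)))
      + (↑b * (Complex.I * ↑φ) + ↑(n - i - b) * -(Complex.I * ↑φ))
      = ((2*(a:ℤ) - i : ℤ) : ℂ) * Complex.I * θ + (((a:ℤ) + 2*b - n : ℤ) : ℂ) * Complex.I * φ := by
    rw [h2, h3]; push_cast; ring
  trans ((n.choose i : ℂ) * (i.choose a) * ((n - i).choose b) *
      (Complex.exp (↑a * (Complex.I * ↑θ) + ↑(i - a) * -(Complex.I * (↑θ + ↑φ))) *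
       Complex.exp (↑b * (Complex.I * ↑φ) + ↑(n - i - b) * -(Complex.I * ↑φ))))
  · ring
  rw [← Complex.exp_add, harg, Complex.exp_add]

-- combinatorial collection lemma
lemma comb (n : ℕ) (T : ℂ) :
    ∑ i ∈ range (n+1), ∑ a ∈ range (i+1), ∑ b ∈ range (n-i+1),
      ((n.choose i : ℂ) * (i.choose a) * ((n-i).choose b) *
        (if ((a:ℤ) + 2*b - n = 0) then T else 0)) *
        (if (2*(a:ℤ) - i = 0) then T else 0)
    = T^2 * ∑ i ∈ (Finset.range (n + 1)).filter (fun i => 2 ∣ i ∧ 4 ∣ (2 * n - i)),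
        (Nat.choose n i : ℂ) * (Nat.choose i (i / 2) : ℂ) *
          (Nat.choose (n - i) ((2 * n - i) / 4) : ℂ) := by
  rw [Finset.mul_sum, Finset.sum_filter]
  refine Finset.sum_congr rfl fun i hi => ?_
  rw [mem_range, Nat.lt_succ_iff] at hi
  by_cases hc : 2 ∣ i ∧ 4 ∣ (2 * n - i)
  · obtain ⟨hc1, hc2⟩ := hc
    have step : ∀ a ∈ range (i+1), ∀ b ∈ range (n-i+1),
        ((n.choose i : ℂ) * (i.choose a) * ((n-i).choose b) *
          (if ((a:ℤ) + 2*b - n = 0) then T else 0)) *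
          (if (2*(a:ℤ) - i = 0) then T else 0)
        = if b = (2*n-i)/4 then
            (if a = i/2 then
              T^2 * ((n.choose i : ℂ) * (i.choose (i/2)) * ((n-i).choose ((2*n-i)/4)))
             else 0) else 0 := by
      intro a ha b hb
      rw [mem_range, Nat.lt_succ_iff] at ha hb
      split_ifs <;> first | (exfalso; omega) | (subst_vars; ring)
    rw [Finset.sum_congr rfl (fun a ha => Finset.sum_congr rfl (step a ha))]
    simp only [Finset.sum_ite_eq' (range (n-i+1))]
    by_cases hb0 : (2*n-i)/4 ∈ range (n-i+1)
    · simp only [if_pos hb0, Finset.sum_ite_eq' (range (i+1))]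
      have hma : i/2 ∈ range (i+1) := by rw [mem_range]; omega
      rw [if_pos hma, if_pos ⟨hc1, hc2⟩]
    · simp only [if_neg hb0, Finset.sum_const_zero]
      rw [if_pos ⟨hc1, hc2⟩]
      rw [mem_range, not_lt] at hb0
      have h0 : (n-i).choose ((2*n-i)/4) = 0 := Nat.choose_eq_zero_of_lt (by omega)
      rw [h0]
      push_cast
      ring
  · rw [if_neg hc]
    refine Finset.sum_eq_zero fun a ha => Finset.sum_eq_zero fun b hb => ?_
    rw [mem_range, Nat.lt_succ_iff] at ha hb
    have key : ¬(((a:ℤ) + 2*b - n = 0) ∧ (2*(a:ℤ) - i = 0)) := by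
      rintro ⟨h1, h2⟩
      exact hc ⟨by omega, by omega⟩
    split_ifs with h1 h2
    · exact absurd ⟨h1, h2⟩ key
    all_goals ring

/-- The constant Laurent coefficient of `(z + w + w⁻¹ + z⁻¹w⁻¹)ⁿ`, computed as a torus
average, equals `∑ᵢ C(n,i) C(i,i/2) C(n−i,(2n−i)/4)`, the sum running over `0 ≤ i ≤ n`
with `i` even and `2n − i` divisible by `4` (`C(a,b) = 0` when `b > a`). -/
theorem constant_term_dP1 (n : ℕ) (hn : 1 ≤ n) :
    ((1 : ℂ) / (2 * Real.pi) ^ 2) *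
        (∫ θ in (0 : ℝ)..(2 * Real.pi), ∫ φ in (0 : ℝ)..(2 * Real.pi),
          (Complex.exp (Complex.I * (θ : ℂ)) + Complex.exp (Complex.I * (φ : ℂ)) +
            Complex.exp (-(Complex.I * (φ : ℂ))) +
            Complex.exp (-(Complex.I * ((θ : ℂ) + (φ : ℂ))))) ^ n)
      = ∑ i ∈ (Finset.range (n + 1)).filter (fun i => 2 ∣ i ∧ 4 ∣ (2 * n - i)),
          (Nat.choose n i : ℂ) * (Nat.choose i (i / 2) : ℂ) *
            (Nat.choose (n - i) ((2 * n - i) / 4) : ℂ) := by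
  have inner : ∀ θ : ℝ,
      (∫ φ in (0:ℝ)..(2*Real.pi),
        (Complex.exp (Complex.I * (θ : ℂ)) + Complex.exp (Complex.I * (φ : ℂ)) +
          Complex.exp (-(Complex.I * (φ : ℂ))) +
          Complex.exp (-(Complex.I * ((θ : ℂ) + (φ : ℂ))))) ^ n)
      = ∑ i ∈ range (n+1), ∑ a ∈ range (i+1), ∑ b ∈ range (n-i+1),
          ((n.choose i : ℂ) * (i.choose a) * ((n-i).choose b) *
            (if ((a:ℤ) + 2*b - n = 0) then ((2*Real.pi:ℝ):ℂ) else 0)) *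
            Complex.exp (((2*(a:ℤ) - i : ℤ) : ℂ) * Complex.I * θ) := by
    intro θ
    simp only [expand n θ]
    rw [intervalIntegral.integral_finset_sum (fun i _ =>
      Continuous.intervalIntegrable (by fun_prop) _ _)]
    refine Finset.sum_congr rfl fun i _ => ?_
    rw [intervalIntegral.integral_finset_sum (fun a _ =>
      Continuous.intervalIntegrable (by fun_prop) _ _)]
    refine Finset.sum_congr rfl fun a _ => ?_
    rw [intervalIntegral.integral_finset_sum (fun b _ =>
      Continuous.intervalIntegrable (by fun_prop) _ _)]
    refine Finset.sum_congr rfl fun b _ => ?_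
    simp only [← mul_assoc]
    rw [intervalIntegral.integral_const_mul, int_exp]
    ring
  have outer :
      (∫ θ in (0 : ℝ)..(2 * Real.pi), ∫ φ in (0 : ℝ)..(2 * Real.pi),
        (Complex.exp (Complex.I * (θ : ℂ)) + Complex.exp (Complex.I * (φ : ℂ)) +
          Complex.exp (-(Complex.I * (φ : ℂ))) +
          Complex.exp (-(Complex.I * ((θ : ℂ) + (φ : ℂ))))) ^ n)
      = ∑ i ∈ range (n+1), ∑ a ∈ range (i+1), ∑ b ∈ range (n-i+1),
          ((n.choose i : ℂ) * (i.choose a) * ((n-i).choose b) *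
            (if ((a:ℤ) + 2*b - n = 0) then ((2*Real.pi:ℝ):ℂ) else 0)) *
            (if (2*(a:ℤ) - i = 0) then ((2*Real.pi:ℝ):ℂ) else 0) := by
    simp only [inner]
    rw [intervalIntegral.integral_finset_sum (fun i _ =>
      Continuous.intervalIntegrable (by fun_prop) _ _)]
    refine Finset.sum_congr rfl fun i _ => ?_
    rw [intervalIntegral.integral_finset_sum (fun a _ =>
      Continuous.intervalIntegrable (by fun_prop) _ _)]
    refine Finset.sum_congr rfl fun a _ => ?_
    rw [intervalIntegral.integral_finset_sum (fun b _ =>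
      Continuous.intervalIntegrable (by fun_prop) _ _)]
    refine Finset.sum_congr rfl fun b _ => ?_
    rw [intervalIntegral.integral_const_mul, int_exp]
  rw [outer, comb n (((2*Real.pi:ℝ):ℂ))]
  rw [← mul_assoc]
  have hT : ((1 : ℂ) / (2 * Real.pi) ^ 2) * (((2*Real.pi:ℝ):ℂ))^2 = 1 := by
    have hπ : ((2:ℂ) * Real.pi) ≠ 0 :=
      mul_ne_zero two_ne_zero (Complex.ofReal_ne_zero.mpr Real.pi_ne_zero)
    rw [show (((2*Real.pi:ℝ):ℂ))^2 = ((2:ℂ) * Real.pi)^2 by push_cast; ring]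
    rw [one_div, inv_mul_cancel₀ (pow_ne_zero 2 hπ)]
  rw [hT, one_mul]
end
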